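/- arXiv:0811.2625 — 8 statements merged into one kernel-verified Lean document; each statement's English description precedes it below -/
import Mathlib

section
/- The number of proper q-colorings of the Turán graph T_{q-1}(n) (the complete (q-1)-partite graph on n vertices with parts as equal as possible) equals q! · ((q-1+r)·2^(s-1) - q + 2), where s and r are the unique integers with n = s(q-1) + r and 0 ≤ r < q-1. -/
namespace TuranAux

/-- extend a function on `Fin m` to `ℕ` by `false` -/
def extFn {m : ℕ} (h : Fin m → Bool) (t : ℕ) : Bool :=
  if ht : t < m then h ⟨t, ht⟩ else false

lemma extFn_eq_true_iff {m : ℕ} (h : Fin m → Bool) (t : ℕ) :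
    extFn h t = true ↔ ∃ ht : t < m, h ⟨t, ht⟩ = true := by
  unfold extFn; split <;> simp_all

/-- size minus one of part `m` -/
def Psize (s r m : ℕ) : ℕ := if m < r then s else s - 1

lemma lt_iff_le_Psize {k s r : ℕ} (hs : 1 ≤ s) (hr : r < k) (i t : ℕ) (hi : i < k) :
    i + t * k < s * k + r ↔ t ≤ Psize s r i := by
  unfold Psize
  by_cases h : i < r <;> simp only [h, if_true, if_false]
  · constructor
    · intro h1; by_contra h2; push_neg at h2
      have h3 : (s + 1) * k ≤ t * k := Nat.mul_le_mul_right _ h2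
      have e : (s + 1) * k = s * k + k := by ring
      omega
    · intro h2
      have h3 : t * k ≤ s * k := Nat.mul_le_mul_right _ h2
      omega
  · constructor
    · intro h1; by_contra h2; push_neg at h2
      have h3 : s * k ≤ t * k := Nat.mul_le_mul_right _ (by omega)
      omega
    · intro h2
      have h3 : t * k ≤ (s - 1) * k := Nat.mul_le_mul_right _ h2
      have e : (s - 1) * k + k = s * k := by
        calc (s - 1) * k + k = (s - 1 + 1) * k := by ring
        _ = s * k := by rw [show s - 1 + 1 = s by omega]
      omega

/-- the unique color missed by an embedding `Fin k ↪ Fin (k+1)` -/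
noncomputable def miss {k : ℕ} (g : Fin k ↪ Fin (k+1)) : Fin (k+1) :=
  ((Finset.univ.image g)ᶜ).min' (by
    apply Finset.card_pos.mp
    rw [Finset.card_compl, Finset.card_image_of_injective _ g.injective]
    simp)

lemma miss_mem {k : ℕ} (g : Fin k ↪ Fin (k+1)) : miss g ∈ (Finset.univ.image g)ᶜ :=
  Finset.min'_mem _ _

lemma miss_ne {k : ℕ} (g : Fin k ↪ Fin (k+1)) (i : Fin k) : miss g ≠ g i := by
  have h := miss_mem g
  rw [Finset.mem_compl] at h
  intro hc
  exact h (hc ▸ Finset.mem_image_of_mem _ (Finset.mem_univ i))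

lemma eq_miss {k : ℕ} (g : Fin k ↪ Fin (k+1)) (c : Fin (k+1)) (hc : ∀ i, c ≠ g i) :
    c = miss g := by
  have hcard : ((Finset.univ.image g)ᶜ).card = 1 := by
    rw [Finset.card_compl, Finset.card_image_of_injective _ g.injective]
    simp
  obtain ⟨a, ha⟩ := Finset.card_eq_one.mp hcard
  have h1 : c ∈ (Finset.univ.image g)ᶜ := by
    rw [Finset.mem_compl]
    intro hc'
    obtain ⟨i, -, hi⟩ := Finset.mem_image.mp hc'
    exact hc i hi.symm
  have h2 := miss_mem g
  rw [ha, Finset.mem_singleton] at h1 h2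
  rw [h1, h2]

section Main

variable {k s r n : ℕ}

def base (hkn : k ≤ n) (i : Fin k) : Fin n := ⟨i, lt_of_lt_of_le i.2 hkn⟩

def vert (hs : 1 ≤ s) (hr : r < k) (hn : n = s * k + r) (i : Fin k) (t : ℕ)
    (ht : t ≤ Psize s r i.val) : Fin n :=
  ⟨i + t * k, by rw [hn]; exact (lt_iff_le_Psize hs hr i t i.2).mpr ht⟩

lemma vert_mod (hs : 1 ≤ s) (hr : r < k) (hn : n = s * k + r) (i : Fin k) (t : ℕ)
    (ht : t ≤ Psize s r i.val) : ((vert hs hr hn i t ht : Fin n) : ℕ) % k = i := by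
  show ((i : ℕ) + t * k) % k = i
  rw [Nat.add_mul_mod_self_right, Nat.mod_eq_of_lt i.2]

lemma vert_div (hs : 1 ≤ s) (hr : r < k) (hn : n = s * k + r) (i : Fin k) (t : ℕ)
    (ht : t ≤ Psize s r i.val) : ((vert hs hr hn i t ht : Fin n) : ℕ) / k = t := by
  show ((i : ℕ) + t * k) / k = t
  have hk0 : 0 < k := lt_of_le_of_lt (Nat.zero_le _) i.2
  rw [Nat.add_mul_div_right _ _ hk0, Nat.div_eq_of_lt i.2, Nat.zero_add]

noncomputable def colf (hk : 0 < k) (g : Fin k ↪ Fin (k+1))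
    (o : Option (Σ i : Fin k, {h : Fin (Psize s r i.val) → Bool // h ≠ fun _ => false}))
    (v : Fin n) : Fin (k+1) :=
  o.elim (g ⟨(v : ℕ) % k, Nat.mod_lt _ hk⟩)
    (fun x => if (v : ℕ) % k = (x.1 : ℕ) ∧ 1 ≤ (v : ℕ) / k ∧
        extFn x.2.1 ((v : ℕ) / k - 1) = true
      then miss g else g ⟨(v : ℕ) % k, Nat.mod_lt _ hk⟩)

lemma colf_proper (hk : 0 < k) (g : Fin k ↪ Fin (k+1))
    (o : Option (Σ i : Fin k, {h : Fin (Psize s r i.val) → Bool // h ≠ fun _ => false})) :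
    ∀ v w : Fin n, (v : ℕ) % k ≠ (w : ℕ) % k → colf hk g o v ≠ colf hk g o w := by
  intro v w hvw
  have hg : g ⟨(v : ℕ) % k, Nat.mod_lt _ hk⟩ ≠ g ⟨(w : ℕ) % k, Nat.mod_lt _ hk⟩ :=
    fun hc => hvw (congrArg Fin.val (g.injective hc))
  cases o with
  | none => exact hg
  | some x =>
    simp only [colf, Option.elim]
    split_ifs with h1 h2 h2
    · exact absurd (h1.1.trans h2.1.symm) hvw
    · exact miss_ne g _
    · exact (miss_ne g _).symm
    · exact hg

lemma colf_base (hk : 0 < k) (hkn : k ≤ n) (g : Fin k ↪ Fin (k+1))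
    (o : Option (Σ i : Fin k, {h : Fin (Psize s r i.val) → Bool // h ≠ fun _ => false}))
    (i : Fin k) : colf (n := n) hk g o (base hkn i) = g i := by
  have hmod : ((base hkn i : Fin n) : ℕ) % k = (i : ℕ) := Nat.mod_eq_of_lt i.2
  have hdiv : ((base hkn i : Fin n) : ℕ) / k = 0 := Nat.div_eq_of_lt i.2
  cases o with
  | none =>
    simp only [colf, Option.elim]
    exact congrArg g (Fin.ext hmod)
  | some x =>
    simp only [colf, Option.elim]
    rw [if_neg]
    · exact congrArg g (Fin.ext hmod)
    · rintro ⟨-, h2, -⟩; rw [hdiv] at h2; omega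

lemma colf_some_ne (hk : 0 < k) (g : Fin k ↪ Fin (k+1))
    (x : Σ i : Fin k, {h : Fin (Psize s r i.val) → Bool // h ≠ fun _ => false})
    (v : Fin n) (hv : (v : ℕ) % k ≠ (x.1 : ℕ)) :
    colf hk g (some x) v = g ⟨(v : ℕ) % k, Nat.mod_lt _ hk⟩ := by
  simp only [colf, Option.elim]
  rw [if_neg]
  rintro ⟨h1, -, -⟩; exact hv h1

lemma colf_vert (hk : 0 < k) (hs : 1 ≤ s) (hr : r < k) (hn : n = s * k + r)
    (g : Fin k ↪ Fin (k+1)) (i : Fin k) (h : Fin (Psize s r i.val) → Bool)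
    (hh : h ≠ fun _ => false) (t : Fin (Psize s r i.val)) :
    colf hk g (some ⟨i, h, hh⟩) (vert hs hr hn i (t.val + 1) t.2) =
      if h t then miss g else g i := by
  have hmod := vert_mod hs hr hn i (t.val + 1) t.2
  have hdiv := vert_div hs hr hn i (t.val + 1) t.2
  have hext : extFn h (((vert hs hr hn i (t.val + 1) t.2 : Fin n) : ℕ) / k - 1) = h t := by
    rw [hdiv]
    simp only [Nat.add_sub_cancel]
    unfold extFn
    rw [dif_pos t.2]
  simp only [colf, Option.elim]
  by_cases hb : h t = true
  · rw [if_pos ⟨hmod, by rw [hdiv]; omega, hext.trans hb⟩, if_pos hb]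
  · rw [if_neg, if_neg hb]
    · exact congrArg g (Fin.ext hmod)
    · rintro ⟨-, -, h3⟩; rw [hext] at h3; exact hb h3

lemma exists_true {m : ℕ} (h : Fin m → Bool) (hh : h ≠ fun _ => false) :
    ∃ t, h t = true := by
  by_contra hc
  push_neg at hc
  exact hh (funext fun t => by simpa using hc t)

lemma key (k q n s r : ℕ) (hq : q = k + 1) (hk : 1 ≤ k) (hs : 1 ≤ s) (hr : r < k)
    (hn : n = s * k + r) :
    Fintype.card {f : Fin n → Fin q //
        ∀ v w : Fin n, (v : ℕ) % k ≠ (w : ℕ) % k → f v ≠ f w} =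
      q.factorial * (1 + (r * (2 ^ s - 1) + (k - r) * (2 ^ (s - 1) - 1))) := by
  subst hq
  have hk0 : 0 < k := hk
  have hkn : k ≤ n := by
    have := Nat.mul_le_mul_right k hs
    omega
  let Ψ : ((Fin k ↪ Fin (k+1)) ×
      Option (Σ i : Fin k, {h : Fin (Psize s r i.val) → Bool // h ≠ fun _ => false})) →
      {f : Fin n → Fin (k+1) // ∀ v w : Fin n, (v : ℕ) % k ≠ (w : ℕ) % k → f v ≠ f w} :=
    fun p => ⟨colf hk0 p.1 p.2, colf_proper hk0 p.1 p.2⟩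
  have hinj : Function.Injective Ψ := by
    rintro ⟨g1, o1⟩ ⟨g2, o2⟩ heq
    have hf : colf (n := n) hk0 g1 o1 = colf hk0 g2 o2 := congrArg Subtype.val heq
    have hg : g1 = g2 := by
      apply DFunLike.ext
      intro i
      rw [← colf_base hk0 hkn g1 o1 i, ← colf_base hk0 hkn g2 o2 i, hf]
    subst hg
    suffices h : o1 = o2 by rw [h]
    rcases o1 with _ | ⟨i1, h1, hh1⟩ <;> rcases o2 with _ | ⟨i2, h2, hh2⟩
    · rfl
    · exfalso
      obtain ⟨t, ht⟩ := exists_true h2 hh2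
      have e := congrFun hf (vert hs hr hn i2 (t.val + 1) t.2)
      rw [colf_vert hk0 hs hr hn g1 i2 h2 hh2 t, if_pos ht] at e
      exact miss_ne g1 _ e.symm
    · exfalso
      obtain ⟨t, ht⟩ := exists_true h1 hh1
      have e := congrFun hf (vert hs hr hn i1 (t.val + 1) t.2)
      rw [colf_vert hk0 hs hr hn g1 i1 h1 hh1 t, if_pos ht] at e
      exact miss_ne g1 _ e
    · obtain ⟨t1, ht1⟩ := exists_true h1 hh1
      have hi : i1 = i2 := by
        by_contra hne
        have e := congrFun hf (vert hs hr hn i1 (t1.val + 1) t1.2)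
        rw [colf_vert hk0 hs hr hn g1 i1 h1 hh1 t1, if_pos ht1,
          colf_some_ne hk0 g1 ⟨i2, h2, hh2⟩ _ (by
            rw [vert_mod hs hr hn i1 (t1.val + 1) t1.2]
            exact fun hc => hne (Fin.ext hc))] at e
        exact miss_ne g1 _ e
      subst hi
      have hhh : h1 = h2 := by
        funext t
        have e := congrFun hf (vert hs hr hn i1 (t.val + 1) t.2)
        rw [colf_vert hk0 hs hr hn g1 i1 h1 hh1 t,
          colf_vert hk0 hs hr hn g1 i1 h2 hh2 t] at e
        by_cases b1 : h1 t = true <;> by_cases b2 : h2 t = true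
        · rw [b1, b2]
        · rw [if_pos b1, if_neg b2] at e
          exact absurd e (miss_ne g1 _)
        · rw [if_neg b1, if_pos b2] at e
          exact absurd e.symm (miss_ne g1 _)
        · simp only [Bool.not_eq_true] at b1 b2
          rw [b1, b2]
      subst hhh
      rfl
  have hsurj : Function.Surjective Ψ := by
    rintro ⟨f, hf⟩
    have hginj : Function.Injective (fun i : Fin k => f (base hkn i)) := by
      intro i j hij
      by_contra hne
      have hadj : ((base hkn i : Fin n) : ℕ) % k ≠ ((base hkn j : Fin n) : ℕ) % k := by
        show (i : ℕ) % k ≠ (j : ℕ) % k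
        rw [Nat.mod_eq_of_lt i.2, Nat.mod_eq_of_lt j.2]
        exact fun hc => hne (Fin.ext hc)
      exact hf _ _ hadj hij
    let g : Fin k ↪ Fin (k+1) := ⟨fun i => f (base hkn i), hginj⟩
    have hgdef : ∀ i, g i = f (base hkn i) := fun i => rfl
    have hdich : ∀ v : Fin n, f v = g ⟨(v : ℕ) % k, Nat.mod_lt _ hk0⟩ ∨ f v = miss g := by
      intro v
      by_cases hcase : ∀ i : Fin k, f v ≠ g i
      · right; exact eq_miss g (f v) hcase
      · left
        push_neg at hcase
        obtain ⟨i, hi⟩ := hcase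
        have hieq : (i : ℕ) = (v : ℕ) % k := by
          by_contra hne
          have hadj : ((base hkn i : Fin n) : ℕ) % k ≠ (v : ℕ) % k := by
            show (i : ℕ) % k ≠ (v : ℕ) % k
            rw [Nat.mod_eq_of_lt i.2]
            exact hne
          exact hf _ _ hadj hi.symm
        rw [hi]
        exact congrArg g (Fin.ext hieq)
    by_cases hmono : ∀ v : Fin n, f v = g ⟨(v : ℕ) % k, Nat.mod_lt _ hk0⟩
    · refine ⟨(g, none), ?_⟩
      apply Subtype.ext
      funext v
      exact (hmono v).symm
    · push_neg at hmono
      obtain ⟨v₀, hv₀⟩ := hmono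
      have hfv₀ : f v₀ = miss g := (hdich v₀).resolve_left hv₀
      have hdivle : ∀ v : Fin n, (v : ℕ) / k ≤ Psize s r ((v : ℕ) % k) := by
        intro v
        apply (lt_iff_le_Psize hs hr _ _ (Nat.mod_lt _ hk0)).mp
        rw [Nat.mod_add_div']
        exact hn ▸ v.2
      have hdiv1 : 1 ≤ (v₀ : ℕ) / k := by
        by_contra hc
        push_neg at hc
        have hlt : (v₀ : ℕ) < k := by
          by_contra hge
          push_neg at hge
          have := (Nat.one_le_div_iff hk0).mpr hge
          omega
        have hb : v₀ = base hkn ⟨(v₀ : ℕ) % k, Nat.mod_lt _ hk0⟩ :=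
          Fin.ext (Nat.mod_eq_of_lt hlt).symm
        exact hv₀ (by rw [hgdef, ← hb])
      set i₀ : Fin k := ⟨(v₀ : ℕ) % k, Nat.mod_lt _ hk0⟩ with hi₀
      have hPs : (v₀ : ℕ) / k ≤ Psize s r i₀.val := hdivle v₀
      let h : Fin (Psize s r i₀.val) → Bool :=
        fun t => decide (f (vert hs hr hn i₀ (t.val + 1) t.2) = miss g)
      have hh : h ≠ fun _ => false := by
        apply Function.ne_iff.mpr
        refine ⟨⟨(v₀ : ℕ) / k - 1, by omega⟩, ?_⟩
        show decide (f (vert hs hr hn i₀ ((v₀ : ℕ) / k - 1 + 1) _) = miss g) ≠ false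
        have hveq : vert hs hr hn i₀ ((v₀ : ℕ) / k - 1 + 1)
            (Fin.mk (n := Psize s r i₀.val) ((v₀ : ℕ) / k - 1) (by omega)).2 = v₀ := by
          apply Fin.ext
          show (i₀ : ℕ) + ((v₀ : ℕ) / k - 1 + 1) * k = (v₀ : ℕ)
          rw [show (v₀ : ℕ) / k - 1 + 1 = (v₀ : ℕ) / k by omega]
          exact Nat.mod_add_div' _ _
        rw [hveq, hfv₀]
        simp
      refine ⟨(g, some ⟨i₀, h, hh⟩), ?_⟩
      apply Subtype.ext
      funext v
      show colf hk0 g (some ⟨i₀, h, hh⟩) v = f v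
      by_cases hC : (v : ℕ) % k = (i₀ : ℕ) ∧ 1 ≤ (v : ℕ) / k ∧
          extFn h ((v : ℕ) / k - 1) = true
      · obtain ⟨hc1, hc2, hc3⟩ := hC
        simp only [colf, Option.elim]
        rw [if_pos ⟨hc1, hc2, hc3⟩]
        obtain ⟨hb, htrue⟩ := (extFn_eq_true_iff h _).mp hc3
        have h5 : f (vert hs hr hn i₀ ((v : ℕ) / k - 1 + 1) hb) = miss g :=
          of_decide_eq_true htrue
        have hveq : vert hs hr hn i₀ ((v : ℕ) / k - 1 + 1) hb = v := by
          apply Fin.ext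
          show (i₀ : ℕ) + ((v : ℕ) / k - 1 + 1) * k = (v : ℕ)
          rw [show (v : ℕ) / k - 1 + 1 = (v : ℕ) / k by omega, ← hc1]
          exact Nat.mod_add_div' _ _
        rw [hveq] at h5
        exact h5.symm
      · simp only [colf, Option.elim]
        rw [if_neg hC]
        rcases hdich v with he | hm
        · exact he.symm
        · exfalso
          apply hC
          have hc1 : (v : ℕ) % k = (i₀ : ℕ) := by
            by_contra hne
            exact hf v v₀ hne (hm.trans hfv₀.symm)
          have hc2 : 1 ≤ (v : ℕ) / k := by
            by_contra hcc
            push_neg at hcc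
            have hvk : (v : ℕ) < k := by
              by_contra hge
              push_neg at hge
              have := (Nat.one_le_div_iff hk0).mpr hge
              omega
            have hb : v = base hkn ⟨(v : ℕ) % k, Nat.mod_lt _ hk0⟩ :=
              Fin.ext (Nat.mod_eq_of_lt hvk).symm
            have hfv : f v = g ⟨(v : ℕ) % k, Nat.mod_lt _ hk0⟩ := by rw [hgdef, ← hb]
            exact miss_ne g _ (hm.symm.trans hfv)
          have hble : (v : ℕ) / k ≤ Psize s r i₀.val := hc1 ▸ hdivle v
          have hc3 : extFn h ((v : ℕ) / k - 1) = true := by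
            apply (extFn_eq_true_iff _ _).mpr
            refine ⟨by omega, ?_⟩
            apply decide_eq_true
            have hveq : vert hs hr hn i₀ ((v : ℕ) / k - 1 + 1)
                (Fin.mk (n := Psize s r i₀.val) ((v : ℕ) / k - 1) (by omega)).2 = v := by
              apply Fin.ext
              show (i₀ : ℕ) + ((v : ℕ) / k - 1 + 1) * k = (v : ℕ)
              rw [show (v : ℕ) / k - 1 + 1 = (v : ℕ) / k by omega, ← hc1]
              exact Nat.mod_add_div' _ _
            rw [hveq]
            exact hm
          exact ⟨hc1, hc2, hc3⟩
  have hcard := Fintype.card_congr (Equiv.ofBijective Ψ ⟨hinj, hsurj⟩)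
  rw [← hcard]
  rw [Fintype.card_prod, Fintype.card_option, Fintype.card_sigma]
  have he : Fintype.card (Fin k ↪ Fin (k+1)) = (k+1).factorial := by
    rw [Fintype.card_embedding_eq, Fintype.card_fin, Fintype.card_fin]
    have h1 := Nat.descFactorial_succ (k+1) k
    have e0 : k + 1 - k = 1 := Nat.add_sub_cancel_left k 1
    rw [e0, one_mul] at h1
    rw [← h1, Nat.descFactorial_self]
  have hsub : ∀ i : Fin k,
      Fintype.card {h : Fin (Psize s r i.val) → Bool // h ≠ fun _ => false} =
        2 ^ Psize s r i.val - 1 := by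
    intro i
    have h1 : Fintype.card {h : Fin (Psize s r i.val) → Bool // h = fun _ => false} = 1 :=
      Fintype.card_subtype_eq _
    have h2 := Fintype.card_subtype_compl
      (fun h : Fin (Psize s r i.val) → Bool => h = fun _ => false)
    simp only [h1] at h2
    simpa using h2
  have hsum : (∑ i : Fin k,
      Fintype.card {h : Fin (Psize s r i.val) → Bool // h ≠ fun _ => false}) =
      r * (2 ^ s - 1) + (k - r) * (2 ^ (s - 1) - 1) := by
    calc (∑ i : Fin k,
        Fintype.card {h : Fin (Psize s r i.val) → Bool // h ≠ fun _ => false})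
        = ∑ i : Fin k, (2 ^ Psize s r i.val - 1) :=
          Finset.sum_congr rfl fun i _ => hsub i
      _ = ∑ m ∈ Finset.range k, (2 ^ Psize s r m - 1) :=
          Fin.sum_univ_eq_sum_range (fun m => 2 ^ Psize s r m - 1) k
      _ = ∑ m ∈ Finset.Ico 0 r, (2 ^ Psize s r m - 1) +
          ∑ m ∈ Finset.Ico r k, (2 ^ Psize s r m - 1) := by
          rw [Finset.range_eq_Ico,
            ← Finset.sum_Ico_consecutive _ (Nat.zero_le r) (le_of_lt hr)]
      _ = r * (2 ^ s - 1) + (k - r) * (2 ^ (s - 1) - 1) := by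
          congr 1
          · rw [show Finset.Ico 0 r = Finset.range r by rw [Finset.range_eq_Ico]]
            have hcg : ∀ m ∈ Finset.range r, 2 ^ Psize s r m - 1 = 2 ^ s - 1 := by
              intro m hm
              unfold Psize
              rw [if_pos (Finset.mem_range.mp hm)]
            rw [Finset.sum_congr rfl hcg, Finset.sum_const, Finset.card_range, smul_eq_mul]
          · have hcg : ∀ m ∈ Finset.Ico r k, 2 ^ Psize s r m - 1 = 2 ^ (s - 1) - 1 := by
              intro m hm
              unfold Psize
              have hge : ¬ m < r := Nat.not_lt.mpr (Finset.mem_Ico.mp hm).1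
              rw [if_neg hge]
            rw [Finset.sum_congr rfl hcg, Finset.sum_const, Nat.card_Ico, smul_eq_mul]
  rw [he, hsum]
  congr 1
  exact Nat.add_comm _ 1

end Main
end TuranAux

/-- The number of proper `q`-colorings of the Turán graph `T_{q-1}(n)` equals
`q! * ((q-1+r) * 2^(s-1) - q + 2)`, where `n = s*(q-1) + r` with `0 ≤ r < q-1`. -/
theorem turan_graph_coloring_count (q n s r : ℕ) (hq : 2 ≤ q) (hs : 1 ≤ s)
    (hr : r < q - 1) (hn : n = s * (q - 1) + r) :
    (Fintype.card {f : Fin n → Fin q //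
        ∀ v w, (SimpleGraph.turanGraph n (q - 1)).Adj v w → f v ≠ f w} : ℤ) =
      (q.factorial : ℤ) * (((q : ℤ) - 1 + r) * 2 ^ (s - 1) - q + 2) := by
  have hk : 1 ≤ q - 1 := by omega
  have hq1 : q = (q - 1) + 1 := by omega
  have hconv : Fintype.card {f : Fin n → Fin q //
      ∀ v w, (SimpleGraph.turanGraph n (q - 1)).Adj v w → f v ≠ f w} =
      Fintype.card {f : Fin n → Fin q //
      ∀ v w : Fin n, (v : ℕ) % (q - 1) ≠ (w : ℕ) % (q - 1) → f v ≠ f w} :=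
    Fintype.card_congr (Equiv.subtypeEquivRight (fun f => by
      simp [SimpleGraph.turanGraph]))
  rw [hconv, TuranAux.key (q - 1) q n s r hq1 hk hs hr hn]
  rcases Nat.exists_eq_add_of_le hs with ⟨m, hm⟩
  subst hm
  have em : 1 + m - 1 = m := Nat.add_sub_cancel_left 1 m
  rw [em]
  have e1 : (1 : ℕ) ≤ 2 ^ (1 + m) := Nat.one_le_two_pow
  have e2 : (1 : ℕ) ≤ 2 ^ m := Nat.one_le_two_pow
  have e3 : r ≤ q - 1 := le_of_lt hr
  have e4 : 1 ≤ q := le_trans one_le_two hq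
  push_cast [Nat.cast_sub e1, Nat.cast_sub e2, Nat.cast_sub e3, Nat.cast_sub e4]
  ring
end

section
/- Any bipartite graph on n vertices with t ≥ 1 edges has at most n - 2√t + 1 connected components. -/
private lemma fin2_eq_one {x : Fin 2} (h : x ≠ 0) : x = 1 := by omega

private lemma sum_sq_le {ι : Type*} (s : Finset ι) (hs : s.Nonempty) (w : ι → ℕ)
    (hw : ∀ i ∈ s, 2 ≤ w i) :
    ∑ i ∈ s, (w i) ^ 2 ≤ (∑ i ∈ s, (w i - 1) + 1) ^ 2 := by
  induction hs using Finset.Nonempty.cons_induction with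
  | singleton i =>
      simp only [Finset.sum_singleton]
      have : 2 ≤ w i := hw i (by simp)
      have : w i - 1 + 1 = w i := by omega
      rw [this]
  | cons a s ha hs ih =>
      have hwa : 2 ≤ w a := hw a (by simp)
      have hws : ∀ i ∈ s, 2 ≤ w i := fun i hi => hw i (Finset.mem_cons_of_mem hi)
      have ih' := ih hws
      rw [Finset.sum_cons, Finset.sum_cons]
      have hT : 1 ≤ ∑ i ∈ s, (w i - 1) := by
        obtain ⟨j, hj⟩ := hs
        calc 1 ≤ w j - 1 := by have := hws j hj; omega
        _ ≤ ∑ i ∈ s, (w i - 1) := Finset.single_le_sum (f := fun i => w i - 1) (fun _ _ => Nat.zero_le _) hj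
      set T := ∑ i ∈ s, (w i - 1) with hTdef
      have key : w a ^ 2 + (T + 1) ^ 2 ≤ (w a - 1 + T + 1) ^ 2 := by
        have h1 : w a - 1 + 1 = w a := by omega
        have h2 : w a - 1 + T + 1 = w a + T := by omega
        rw [h2]
        have hwa1 : 1 ≤ w a := by omega
        nlinarith [hwa, hT]
      calc w a ^ 2 + ∑ i ∈ s, w i ^ 2 ≤ w a ^ 2 + (T + 1) ^ 2 := by omega
        _ ≤ (w a - 1 + T + 1) ^ 2 := key
        _ = (w a - 1 + (T + 1)) ^ 2 := by ring_nf

/-- Any bipartite graph on `n` vertices with `t ≥ 1` edges has at most `n - 2√t + 1`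
connected components. -/
theorem bipartite_component_bound (V : Type*) [Fintype V] [DecidableEq V]
    (G : SimpleGraph V) [DecidableRel G.Adj] (n t : ℕ) (hbip : G.Colorable 2)
    (hn : Fintype.card V = n) (ht : G.edgeFinset.card = t) (ht1 : 1 ≤ t) :
    (Fintype.card G.ConnectedComponent : ℝ) ≤ (n : ℝ) - 2 * Real.sqrt t + 1 := by
  classical
  obtain ⟨col⟩ := hbip
  set c := Fintype.card G.ConnectedComponent with hc
  -- fibers of vertices
  set F : G.ConnectedComponent → Finset V :=
    fun K => Finset.univ.filter (fun v => G.connectedComponentMk v = K) with hF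
  have hnF : ∑ K, (F K).card = n := by
    rw [← hn, ← Finset.card_univ]
    exact (Finset.card_eq_sum_card_fiberwise (f := fun v => G.connectedComponentMk v) (fun x _ => Finset.mem_univ _)).symm
  have hF1 : ∀ K, 1 ≤ (F K).card := by
    intro K
    obtain ⟨v, hv⟩ := K.exists_rep
    have hv' : G.connectedComponentMk v = K := hv
    have : v ∈ F K := by
      simp only [hF, Finset.mem_filter]
      exact ⟨Finset.mem_univ v, hv'⟩
    exact Finset.card_pos.mpr ⟨v, this⟩
  -- edge fibers
  set f : Sym2 V → G.ConnectedComponent :=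
    fun e => G.connectedComponentMk e.out.1 with hfdef
  set E : G.ConnectedComponent → Finset (Sym2 V) :=
    fun K => G.edgeFinset.filter (fun e => f e = K) with hE
  have htE : ∑ K, (E K).card = t := by
    rw [← ht]
    exact (Finset.card_eq_sum_card_fiberwise (f := f) (fun x _ => Finset.mem_univ _)).symm
  -- per-component bipartition
  set A : G.ConnectedComponent → Finset V :=
    fun K => Finset.univ.filter (fun v => G.connectedComponentMk v = K ∧ col v = 0) with hA
  set B : G.ConnectedComponent → Finset V :=
    fun K => Finset.univ.filter (fun v => G.connectedComponentMk v = K ∧ col v = 1) with hB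
  set g : Sym2 V → V × V := fun e => if col e.out.1 = 0 then e.out else e.out.swap with hg
  have hgmk : ∀ e : Sym2 V, Sym2.mk (g e).1 (g e).2 = e := by
    intro e
    by_cases h : col e.out.1 = 0 <;> simp [hg, h, Sym2.eq_swap (a := e.out.2), Sym2.mk, e.out_eq]
  have hgmem : ∀ K, ∀ e ∈ E K, g e ∈ (A K) ×ˢ (B K) := by
    intro K e he
    rw [hE, Finset.mem_filter] at he
    obtain ⟨heG, hfe⟩ := he
    have hadj : G.Adj e.out.1 e.out.2 := by
      rw [SimpleGraph.mem_edgeFinset] at heG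
      have := e.out_eq
      rw [← this] at heG
      exact heG
    have hcol : col e.out.1 ≠ col e.out.2 := col.valid hadj
    have hK1 : G.connectedComponentMk e.out.1 = K := hfe
    have hK2 : G.connectedComponentMk e.out.2 = K := by
      rw [← hK1]
      exact (SimpleGraph.ConnectedComponent.eq).mpr hadj.reachable.symm
    rw [Finset.mem_product]
    by_cases h : col e.out.1 = 0
    · have h2 : col e.out.2 = 1 := fin2_eq_one (fun h0 => hcol (by rw [h, h0]))
      constructor
      · simp [hg, h, hA, hK1]
      · simp [hg, h, hB, hK2, h2]
    · have h1 : col e.out.1 = 1 := fin2_eq_one h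
      have h2 : col e.out.2 = 0 := by
        by_contra h2
        exact hcol (by rw [h1, fin2_eq_one h2])
      constructor
      · simp [hg, h, hA, hK2, h2, Prod.swap]
      · simp [hg, h, hB, hK1, h1, Prod.swap]
  have hEcard : ∀ K, (E K).card ≤ (A K).card * (B K).card := by
    intro K
    have : (E K).card ≤ ((A K) ×ˢ (B K)).card := by
      apply Finset.card_le_card_of_injOn g (hgmem K)
      intro e he e' he' hgee
      rw [← hgmk e, ← hgmk e', hgee]
    simpa [Finset.card_product] using this
  set w : G.ConnectedComponent → ℕ := fun K => (A K).card + (B K).card with hwdef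
  have hABdisj : ∀ K, Disjoint (A K) (B K) := by
    intro K
    rw [Finset.disjoint_left]
    intro v hv hv'
    rw [hA, Finset.mem_filter] at hv
    rw [hB, Finset.mem_filter] at hv'
    have := hv.2.2
    have := hv'.2.2
    simp_all
  have hwF : ∀ K, w K ≤ (F K).card := by
    intro K
    show (A K).card + (B K).card ≤ (F K).card
    have hsub : (A K) ∪ (B K) ⊆ F K := by
      intro v hv
      rcases Finset.mem_union.mp hv with h | h
      · rw [hA, Finset.mem_filter] at h; simp [hF, h.2.1]
      · rw [hB, Finset.mem_filter] at h; simp [hF, h.2.1]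
    calc (A K).card + (B K).card = ((A K) ∪ (B K)).card :=
          (Finset.card_union_of_disjoint (hABdisj K)).symm
      _ ≤ (F K).card := Finset.card_le_card hsub
  have h4E : ∀ K, 4 * (E K).card ≤ (w K) ^ 2 := by
    intro K
    have := hEcard K
    show 4 * (E K).card ≤ ((A K).card + (B K).card) ^ 2
    nlinarith [this, sq_nonneg ((A K).card - (B K).card : ℤ)]
  have hw2 : ∀ K, 1 ≤ (E K).card → 2 ≤ w K := by
    intro K hEK
    obtain ⟨e, he⟩ := Finset.card_pos.mp hEK
    have := hgmem K e he
    rw [Finset.mem_product] at this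
    have hA1 : 1 ≤ (A K).card := Finset.card_pos.mpr ⟨_, this.1⟩
    have hB1 : 1 ≤ (B K).card := Finset.card_pos.mpr ⟨_, this.2⟩
    show 2 ≤ (A K).card + (B K).card
    omega
  -- sum over nontrivial components
  set S : Finset G.ConnectedComponent := Finset.univ.filter (fun K => 1 ≤ (E K).card) with hS
  have htS : ∑ K ∈ S, (E K).card = t := by
    rw [← htE, hS]
    exact Finset.sum_filter_of_ne (fun K _ h => Nat.one_le_iff_ne_zero.mpr h)
  have hSne : S.Nonempty := by
    rw [Finset.nonempty_iff_ne_empty]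
    intro h
    rw [h, Finset.sum_empty] at htS
    omega
  have hceq : c = ∑ _K : G.ConnectedComponent, 1 := by
    simp [hc]
  have hnc : ∑ K, ((F K).card - 1) + c = n := by
    rw [hceq, ← Finset.sum_add_distrib, ← hnF]
    exact Finset.sum_congr rfl (fun K _ => Nat.sub_add_cancel (hF1 K))
  have hcn : c ≤ n := by omega
  have hsumS : ∑ K ∈ S, (w K - 1) ≤ n - c := by
    calc ∑ K ∈ S, (w K - 1) ≤ ∑ K ∈ S, ((F K).card - 1) :=
          Finset.sum_le_sum (fun K _ => Nat.sub_le_sub_right (hwF K) 1)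
      _ ≤ ∑ K, ((F K).card - 1) :=
          Finset.sum_le_sum_of_subset (Finset.subset_univ S)
      _ = n - c := by omega
  have hmain : 4 * t ≤ (n - c + 1) ^ 2 := by
    calc 4 * t = ∑ K ∈ S, 4 * (E K).card := by rw [← htS, Finset.mul_sum]
      _ ≤ ∑ K ∈ S, (w K) ^ 2 := Finset.sum_le_sum (fun K _ => h4E K)
      _ ≤ (∑ K ∈ S, (w K - 1) + 1) ^ 2 :=
          sum_sq_le S hSne w (fun K hK => hw2 K (Finset.mem_filter.mp hK).2)
      _ ≤ (n - c + 1) ^ 2 := Nat.pow_le_pow_left (by omega) 2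
  set m : ℕ := n - c + 1 with hm
  have hreal : 2 * Real.sqrt t ≤ (m : ℝ) := by
    have hcast : ((4 * t : ℕ) : ℝ) ≤ ((m : ℝ)) ^ 2 := by
      rw [← Nat.cast_pow]
      exact_mod_cast hmain
    have h1 : Real.sqrt ((4 * t : ℕ) : ℝ) ≤ Real.sqrt ((m : ℝ) ^ 2) :=
      Real.sqrt_le_sqrt hcast
    rw [Real.sqrt_sq (by positivity)] at h1
    have h2 : Real.sqrt ((4 * t : ℕ) : ℝ) = 2 * Real.sqrt t := by
      push_cast
      rw [show (4 : ℝ) * t = 2 ^ 2 * t by ring, Real.sqrt_mul (by positivity),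
        Real.sqrt_sq (by norm_num)]
    rw [h2] at h1
    exact h1
  have hmcast : (m : ℝ) = (n : ℝ) - c + 1 := by
    rw [hm]
    push_cast [Nat.cast_sub hcn]
    ring
  rw [hmcast] at hreal
  linarith
end

section
/- Let F be the graph obtained from the complete bipartite graph K_{a,b} by deleting a star of r edges all incident to a single vertex of the b-side, where r < a ≤ b and a ≥ 2, b ≥ 2. Then the number of proper 3-colorings of F equals 3·2^a + 3·2^b + 6·(2^r - 2). -/
open Finset

/-! ### Small decidable facts about `Fin 3` -/

private lemma d1' : ∀ d : Fin 3, (univ.filter fun x : Fin 3 => x ≠ d).card = 2 := by decide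
private lemma d2' : ∀ d e : Fin 3, d ≠ e →
    (univ.filter fun x : Fin 3 => x ≠ d ∧ x ≠ e).card = 1 := by decide
private lemma d3' : (univ.filter fun x : Fin 3 => x ≠ 0 ∧ x ≠ 1 ∧ x ≠ 2).card = 0 := by decide
private lemma d5' : ∀ c : Fin 3, (univ.filter fun x : Fin 3 => x = c).card = 1 := by decide
private lemma fin3_exh : ∀ x : Fin 3, x = 0 ∨ x = 1 ∨ x = 2 := by decide
private lemma other2 : ∀ c : Fin 3, ∃ p : Fin 3 × Fin 3,
    p.1 ≠ c ∧ p.2 ≠ c ∧ p.1 ≠ p.2 ∧ ∀ x, x = c ∨ x = p.1 ∨ x = p.2 := by decide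

/-! ### Counting functions with pointwise constraints -/

private lemma card_pi_filter {n : ℕ} (p : Fin n → Fin 3 → Prop) [∀ i x, Decidable (p i x)] :
    (univ.filter (fun g : Fin n → Fin 3 => ∀ i, p i (g i))).card
      = ∏ i, (univ.filter (p i)).card := by
  rw [← Fintype.card_subtype]
  rw [Fintype.card_congr (Equiv.subtypePiEquivPi (p := p))]
  rw [Fintype.card_pi]
  exact Finset.prod_congr rfl fun i _ => Fintype.card_subtype _

private lemma card_filter_lt {a r : ℕ} (hra : r ≤ a) :
    (univ.filter (fun i : Fin a => (i : ℕ) < r)).card = r := by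
  rw [show (univ.filter (fun i : Fin a => (i : ℕ) < r))
      = Finset.image (Fin.castLE hra) univ by
    ext i
    simp only [mem_filter, mem_univ, true_and, Finset.mem_image]
    constructor
    · intro h
      refine ⟨⟨(i : ℕ), h⟩, ?_⟩
      ext; simp
    · rintro ⟨j, rfl⟩; exact j.2]
  rw [Finset.card_image_of_injective _ (Fin.castLE_injective hra)]
  simp

private lemma prod_ite_lt {a r : ℕ} (m n : ℕ) (hra : r ≤ a) :
    (∏ i : Fin a, if (i : ℕ) < r then m else n) = m ^ r * n ^ (a - r) := by
  rw [Finset.prod_ite, Finset.prod_const, Finset.prod_const, card_filter_lt hra]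
  congr 1
  rw [Finset.filter_not, Finset.card_sdiff_of_subset (Finset.filter_subset _ _),
    card_filter_lt hra, Finset.card_univ, Fintype.card_fin]

/-! ### Structure of the "avoided colors" filters -/

section tail

variable {a r : ℕ}

private lemma tail_notmem (g : Fin a → Fin 3) {k : ℕ} (hk : k < a) :
    g ⟨k, hk⟩ ∉ univ.filter (fun x : Fin 3 => ∀ i : Fin a, ¬(i : ℕ) < k → g i ≠ x) := by
  simp only [mem_filter, mem_univ, true_and, not_forall]
  exact ⟨⟨k, hk⟩, by simp⟩

private lemma tail_card_le (g : Fin a → Fin 3) {k : ℕ} (hk : k < a) :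
    (univ.filter (fun x : Fin 3 => ∀ i : Fin a, ¬(i : ℕ) < k → g i ≠ x)).card ≤ 2 := by
  have hsub : (univ.filter (fun x : Fin 3 => ∀ i : Fin a, ¬(i : ℕ) < k → g i ≠ x))
      ⊆ (univ : Finset (Fin 3)).erase (g ⟨k, hk⟩) :=
    Finset.subset_erase.mpr ⟨Finset.filter_subset _ _, tail_notmem g hk⟩
  have := Finset.card_le_card hsub
  rwa [Finset.card_erase_of_mem (mem_univ _), card_univ, Fintype.card_fin] at this

private lemma tail_card_eq_two_iff (g : Fin a → Fin 3) {k : ℕ} (hk : k < a) :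
    (univ.filter (fun x : Fin 3 => ∀ i : Fin a, ¬(i : ℕ) < k → g i ≠ x)).card = 2 ↔
      ∃ c, ∀ i : Fin a, ¬(i : ℕ) < k → g i = c := by
  constructor
  · intro h2
    refine ⟨g ⟨k, hk⟩, ?_⟩
    by_contra hcon
    push_neg at hcon
    obtain ⟨i, hi, hgi⟩ := hcon
    have hine : ¬ (i : ℕ) < k := by omega
    have hsub : (univ.filter (fun x : Fin 3 => ∀ i : Fin a, ¬(i : ℕ) < k → g i ≠ x))
        ⊆ ({g ⟨k, hk⟩, g i} : Finset (Fin 3))ᶜ := by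
      intro x hx
      simp only [mem_filter, mem_univ, true_and] at hx
      simp only [Finset.mem_compl, Finset.mem_insert, Finset.mem_singleton]
      push_neg
      exact ⟨fun h => (hx ⟨k, hk⟩ (by simp) h.symm), fun h => (hx i hine h.symm)⟩
    have hle := Finset.card_le_card hsub
    have hpair : ({g ⟨k, hk⟩, g i} : Finset (Fin 3)).card = 2 := by
      rw [Finset.card_insert_of_notMem
        (by simp only [Finset.mem_singleton]; exact fun h => hgi h.symm),
        Finset.card_singleton]
    have hcompl : (({g ⟨k, hk⟩, g i} : Finset (Fin 3))ᶜ).card = 1 := by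
      rw [Finset.card_compl, hpair]; rfl
    omega
  · rintro ⟨c, hc⟩
    have heq : (univ.filter (fun x : Fin 3 => ∀ i : Fin a, ¬(i : ℕ) < k → g i ≠ x))
        = univ.filter (fun x : Fin 3 => x ≠ c) := by
      apply Finset.filter_congr
      rintro x -
      constructor
      · intro h hxc; exact h ⟨k, hk⟩ (by simp) (by rw [hc ⟨k, hk⟩ (by simp), hxc])
      · intro hxc i hi; rw [hc i hi]; exact fun h => hxc h.symm
    rw [heq, d1']

end tail

/-! ### The pointwise weight identity -/

private lemma pointwise_id {b u v : ℕ} (hb : 2 ≤ b) (huv : u ≤ v) (hv : v ≤ 2) :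
    ((v * u ^ (b - 1) : ℕ) : ℤ) =
      (if u = 2 then (2 : ℤ) ^ b - 2 else 0) + (if 1 ≤ u ∧ v = 2 then 1 else 0)
        + (if 1 ≤ u then 1 else 0) := by
  have hb1 : b - 1 + 1 = b := by omega
  have h2b : (2 : ℤ) ^ b = 2 ^ (b - 1) * 2 := by rw [← pow_succ, hb1]
  have hu : u ≤ 2 := huv.trans hv
  interval_cases u <;> interval_cases v <;>
    push_cast <;>
    simp_all [zero_pow, Nat.sub_ne_zero_of_lt (by omega : 1 < b)] <;> ring_nf

/-! ### The three counting lemmas -/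

section counts

variable {a r : ℕ}

private lemma cardA (d : Fin 3) :
    (univ.filter fun g : Fin a → Fin 3 => ∀ i, g i ≠ d).card = 2 ^ a := by
  rw [card_pi_filter (fun _ x => x ≠ d)]
  simp [d1']

private lemma cardS1 (ha : 1 ≤ a) :
    (univ.filter fun g : Fin a → Fin 3 => ∃ c, ∀ i, g i = c).card = 3 := by
  classical
  have hset : (univ.filter fun g : Fin a → Fin 3 => ∃ c, ∀ i, g i = c)
      = univ.biUnion (fun c : Fin 3 => univ.filter fun g : Fin a → Fin 3 => ∀ i, g i = c) := by
    ext g; simp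
  rw [hset, Finset.card_biUnion]
  · have : ∀ c : Fin 3, (univ.filter fun g : Fin a → Fin 3 => ∀ i, g i = c).card = 1 := by
      intro c
      rw [card_pi_filter (fun _ x => x = c)]
      simp [d5']
    simp [this]
  · intro c _ c' _ hcc'
    apply Finset.disjoint_left.mpr
    intro g hg hg'
    simp only [mem_filter, mem_univ, true_and] at hg hg'
    exact hcc' ((hg ⟨0, by omega⟩).symm.trans (hg' ⟨0, by omega⟩))

private lemma cardS3 (ha : 1 ≤ a) :
    (univ.filter fun g : Fin a → Fin 3 => ∃ d, ∀ i, g i ≠ d).card + 3 = 3 * 2 ^ a := by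
  classical
  set A : Fin 3 → Finset (Fin a → Fin 3) :=
    fun d => univ.filter fun g : Fin a → Fin 3 => ∀ i, g i ≠ d with hAdef
  have hA : ∀ d, (A d).card = 2 ^ a := fun d => cardA d
  have hAB : ∀ d e : Fin 3, d ≠ e → (A d ∩ A e).card = 1 := by
    intro d e hde
    have : A d ∩ A e = univ.filter fun g : Fin a → Fin 3 => ∀ i, g i ≠ d ∧ g i ≠ e := by
      ext g; simp [hAdef, forall_and]
    rw [this, card_pi_filter (fun _ x => x ≠ d ∧ x ≠ e)]
    simp [d2' d e hde]
  have hABC : ((A 0 ∩ A 2) ∩ (A 1 ∩ A 2)).card = 0 := by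
    have : (A 0 ∩ A 2) ∩ (A 1 ∩ A 2)
        = univ.filter fun g : Fin a → Fin 3 => ∀ i, g i ≠ 0 ∧ g i ≠ 1 ∧ g i ≠ 2 := by
      ext g; simp only [hAdef, Finset.mem_inter, mem_filter, mem_univ, true_and, forall_and]
      tauto
    rw [this, card_pi_filter (fun _ x => x ≠ 0 ∧ x ≠ 1 ∧ x ≠ 2)]
    simp only [d3', Finset.prod_const, Finset.card_univ, Fintype.card_fin]
    exact zero_pow (by omega)
  have hS : (univ.filter fun g : Fin a → Fin 3 => ∃ d, ∀ i, g i ≠ d)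
      = (A 0 ∪ A 1) ∪ A 2 := by
    ext g
    simp only [mem_filter, mem_univ, true_and, Finset.mem_union, hAdef]
    constructor
    · rintro ⟨d, hd⟩
      rcases fin3_exh d with rfl | rfl | rfl
      · exact Or.inl (Or.inl (by simpa using hd))
      · exact Or.inl (Or.inr (by simpa using hd))
      · exact Or.inr (by simpa using hd)
    · rintro ((h | h) | h)
      · exact ⟨0, by simpa using h⟩
      · exact ⟨1, by simpa using h⟩
      · exact ⟨2, by simpa using h⟩
  have h01 := Finset.card_union_add_card_inter (A 0) (A 1)
  have h012 := Finset.card_union_add_card_inter (A 0 ∪ A 1) (A 2)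
  have hdist : (A 0 ∪ A 1) ∩ A 2 = (A 0 ∩ A 2) ∪ (A 1 ∩ A 2) :=
    Finset.union_inter_distrib_right _ _ _
  have h0212 := Finset.card_union_add_card_inter (A 0 ∩ A 2) (A 1 ∩ A 2)
  rw [hS]
  rw [hdist] at h012
  rw [hA, hA, hAB 0 1 (by decide)] at h01
  rw [hABC, hAB 0 2 (by decide), hAB 1 2 (by decide)] at h0212
  rw [hA] at h012
  omega

private lemma cardS2 (hra : r < a) :
    (univ.filter fun g : Fin a → Fin 3 =>
        (∃ d, ∀ i, g i ≠ d) ∧ ∃ c, ∀ i : Fin a, ¬(i : ℕ) < r → g i = c).card + 3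
      = 6 * 2 ^ r := by
  classical
  set W : Fin 3 → Finset (Fin a → Fin 3) := fun c =>
    univ.filter fun g : Fin a → Fin 3 =>
      (∀ i : Fin a, ¬(i : ℕ) < r → g i = c) ∧ ∃ d, d ≠ c ∧ ∀ i, g i ≠ d with hWdef
  have hset : (univ.filter fun g : Fin a → Fin 3 =>
      (∃ d, ∀ i, g i ≠ d) ∧ ∃ c, ∀ i : Fin a, ¬(i : ℕ) < r → g i = c)
      = univ.biUnion W := by
    ext g
    simp only [mem_filter, mem_univ, true_and, Finset.mem_biUnion, hWdef]
    constructor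
    · rintro ⟨⟨d, hd⟩, ⟨c, hc⟩⟩
      refine ⟨c, hc, d, ?_, hd⟩
      intro hdc
      exact hd ⟨r, hra⟩ (by rw [hc ⟨r, hra⟩ (by simp), hdc])
    · rintro ⟨c, hc, d, -, hd⟩
      exact ⟨⟨d, hd⟩, ⟨c, hc⟩⟩
  have hWcard : ∀ c : Fin 3, (W c).card + 1 = 2 ^ r + 2 ^ r := by
    intro c
    obtain ⟨⟨d₁, d₂⟩, hd1, hd2, hdd, hexh⟩ := other2 c
    set X : Fin 3 → Finset (Fin a → Fin 3) := fun d =>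
      univ.filter fun g : Fin a → Fin 3 =>
        ∀ i : Fin a, (¬(i : ℕ) < r → g i = c) ∧ g i ≠ d with hXdef
    have hWX : W c = X d₁ ∪ X d₂ := by
      ext g
      simp only [mem_filter, mem_univ, true_and, Finset.mem_union, hWdef, hXdef, forall_and]
      constructor
      · rintro ⟨htail, d, hdc, hd⟩
        rcases hexh d with rfl | rfl | rfl
        · exact absurd rfl hdc
        · exact Or.inl ⟨htail, hd⟩
        · exact Or.inr ⟨htail, hd⟩
      · rintro (⟨htail, hd⟩ | ⟨htail, hd⟩)
        · exact ⟨htail, d₁, hd1, hd⟩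
        · exact ⟨htail, d₂, hd2, hd⟩
    have hXcard : ∀ d : Fin 3, d ≠ c → (X d).card = 2 ^ r := by
      intro d hdc
      rw [hXdef]
      rw [card_pi_filter (fun i x => (¬(i : ℕ) < r → x = c) ∧ x ≠ d)]
      have hterm : ∀ i : Fin a,
          (univ.filter fun x : Fin 3 => (¬(i : ℕ) < r → x = c) ∧ x ≠ d).card
          = if (i : ℕ) < r then 2 else 1 := by
        intro i
        by_cases hi : (i : ℕ) < r
        · have : (univ.filter fun x : Fin 3 => (¬(i : ℕ) < r → x = c) ∧ x ≠ d)
              = univ.filter fun x : Fin 3 => x ≠ d := by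
            apply Finset.filter_congr; rintro x -
            simp [hi]
          rw [this, if_pos hi]
          exact d1' d
        · have : (univ.filter fun x : Fin 3 => (¬(i : ℕ) < r → x = c) ∧ x ≠ d)
              = univ.filter fun x : Fin 3 => x = c := by
            apply Finset.filter_congr; rintro x -
            simp only [hi, not_false_iff, forall_true_left, true_implies]
            constructor
            · rintro ⟨h, -⟩; exact h
            · rintro rfl; exact ⟨rfl, fun h => hdc h.symm⟩
          rw [this, if_neg hi]
          exact d5' c
      rw [Finset.prod_congr rfl fun i _ => hterm i, prod_ite_lt 2 1 hra.le, one_pow, mul_one]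
    have hXX : (X d₁ ∩ X d₂).card = 1 := by
      have hXXeq : X d₁ ∩ X d₂ = univ.filter fun g : Fin a → Fin 3 =>
          ∀ i : Fin a, ((¬(i : ℕ) < r → g i = c) ∧ g i ≠ d₁) ∧ g i ≠ d₂ := by
        ext g
        simp only [Finset.mem_inter, mem_filter, mem_univ, true_and, hXdef, forall_and]
        tauto
      rw [hXXeq, card_pi_filter (fun i x => ((¬(i : ℕ) < r → x = c) ∧ x ≠ d₁) ∧ x ≠ d₂)]
      have hterm : ∀ i : Fin a,
          (univ.filter fun x : Fin 3 => ((¬(i : ℕ) < r → x = c) ∧ x ≠ d₁) ∧ x ≠ d₂).card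
          = 1 := by
        intro i
        by_cases hi : (i : ℕ) < r
        · have : (univ.filter fun x : Fin 3 => ((¬(i : ℕ) < r → x = c) ∧ x ≠ d₁) ∧ x ≠ d₂)
              = univ.filter fun x : Fin 3 => x ≠ d₁ ∧ x ≠ d₂ := by
            apply Finset.filter_congr; rintro x -
            simp [hi, and_assoc]
          rw [this]
          exact d2' _ _ hdd
        · have : (univ.filter fun x : Fin 3 => ((¬(i : ℕ) < r → x = c) ∧ x ≠ d₁) ∧ x ≠ d₂)
              = univ.filter fun x : Fin 3 => x = c := by
            apply Finset.filter_congr; rintro x -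
            simp only [hi, not_false_iff, forall_true_left, true_implies]
            constructor
            · rintro ⟨⟨h, -⟩, -⟩; exact h
            · rintro rfl
              exact ⟨⟨rfl, fun h => hd1 h.symm⟩, fun h => hd2 h.symm⟩
          rw [this]
          exact d5' c
      rw [Finset.prod_congr rfl fun i _ => hterm i]
      simp
    have := Finset.card_union_add_card_inter (X d₁) (X d₂)
    rw [hXX, hXcard d₁ hd1, hXcard d₂ hd2, ← hWX] at this
    omega
  have hdisj : ∀ c ∈ (univ : Finset (Fin 3)), ∀ c' ∈ univ, c ≠ c' → Disjoint (W c) (W c') := by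
    intro c _ c' _ hcc'
    apply Finset.disjoint_left.mpr
    intro g hg hg'
    simp only [mem_filter, mem_univ, true_and, hWdef] at hg hg'
    exact hcc' ((hg.1 ⟨r, hra⟩ (by simp)).symm.trans (hg'.1 ⟨r, hra⟩ (by simp)))
  rw [hset, Finset.card_biUnion hdisj]
  have h2r : 1 ≤ 2 ^ r := Nat.one_le_two_pow
  have hW' : ∀ c : Fin 3, (W c).card = 2 ^ r + 2 ^ r - 1 := fun c => by
    have := hWcard c; omega
  rw [Finset.sum_congr rfl fun c _ => hW' c]
  simp only [Finset.sum_const, Finset.card_univ, Fintype.card_fin, smul_eq_mul]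
  omega

end counts

/-! ### The sigma decomposition -/

private def colorEquiv (a b r : ℕ) :
    {f : Fin a ⊕ Fin b → Fin 3 //
      ∀ (i : Fin a) (j : Fin b), ¬((j : ℕ) = 0 ∧ (i : ℕ) < r) → f (Sum.inl i) ≠ f (Sum.inr j)}
    ≃ Σ g : Fin a → Fin 3,
        {h : Fin b → Fin 3 //
          ∀ j : Fin b, ∀ i : Fin a, ¬((j : ℕ) = 0 ∧ (i : ℕ) < r) → g i ≠ h j} where
  toFun f := ⟨fun i => f.1 (Sum.inl i), ⟨fun j => f.1 (Sum.inr j), fun j i hc => f.2 i j hc⟩⟩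
  invFun s := ⟨Sum.elim s.1 s.2.1, fun i j hc => s.2.2 j i hc⟩
  left_inv f := by
    apply Subtype.ext
    funext v
    cases v <;> rfl
  right_inv s := rfl

private lemma main_count {a b r : ℕ} (hra : r < a) (hb : 2 ≤ b) :
    Fintype.card {f : Fin a ⊕ Fin b → Fin 3 //
      ∀ (i : Fin a) (j : Fin b), ¬((j : ℕ) = 0 ∧ (i : ℕ) < r) → f (Sum.inl i) ≠ f (Sum.inr j)}
    = ∑ g : Fin a → Fin 3,
        ((univ.filter fun x : Fin 3 => ∀ i : Fin a, ¬(i : ℕ) < r → g i ≠ x).card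
          * (univ.filter fun x : Fin 3 => ∀ i : Fin a, g i ≠ x).card ^ (b - 1)) := by
  haveI : NeZero b := ⟨by omega⟩
  rw [Fintype.card_congr (colorEquiv a b r), Fintype.card_sigma]
  apply Finset.sum_congr rfl
  intro g _
  rw [Fintype.card_congr
    (Equiv.subtypePiEquivPi (p := fun (j : Fin b) (y : Fin 3) =>
      ∀ i : Fin a, ¬((j : ℕ) = 0 ∧ (i : ℕ) < r) → g i ≠ y))]
  rw [Fintype.card_pi]
  have hterm : ∀ j : Fin b,
      Fintype.card {y : Fin 3 // ∀ i : Fin a, ¬((j : ℕ) = 0 ∧ (i : ℕ) < r) → g i ≠ y}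
      = (univ.filter fun y : Fin 3 =>
          ∀ i : Fin a, ¬((j : ℕ) = 0 ∧ (i : ℕ) < r) → g i ≠ y).card :=
    fun j => Fintype.card_subtype _
  rw [Finset.prod_congr rfl fun j _ => hterm j]
  rw [← Finset.mul_prod_erase univ _ (mem_univ (0 : Fin b))]
  congr 1
  · apply congrArg
    apply Finset.filter_congr
    rintro x -
    simp [Fin.val_zero]
  · rw [Finset.prod_congr rfl (g := fun _ => (univ.filter fun x : Fin 3 =>
        ∀ i : Fin a, g i ≠ x).card) ?_, Finset.prod_const,
      Finset.card_erase_of_mem (mem_univ _), Finset.card_univ, Fintype.card_fin]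
    intro j hj
    apply congrArg
    apply Finset.filter_congr
    rintro x -
    have hj0 : (j : ℕ) ≠ 0 := by
      intro h
      exact (Finset.mem_erase.mp hj).1 (Fin.ext (by simpa using h))
    constructor
    · intro h i
      exact h i (fun hc => hj0 hc.1)
    · intro h i _
      exact h i

/-- The complete bipartite graph `K_{a,b}` (with sides `Fin a` and `Fin b`) minus a star
of `r` edges, all joining the vertex `0` of the `b`-side to the first `r` vertices of the
`a`-side. -/
def starRemovedBipartite (a b r : ℕ) : SimpleGraph (Fin a ⊕ Fin b) where
  Adj x y := ∃ (i : Fin a) (j : Fin b),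
    ((x = Sum.inl i ∧ y = Sum.inr j) ∨ (x = Sum.inr j ∧ y = Sum.inl i)) ∧
      ¬((j : ℕ) = 0 ∧ (i : ℕ) < r)
  symm := by
    constructor
    rintro x y ⟨i, j, h, hn⟩
    exact ⟨i, j, by tauto, hn⟩
  loopless := by
    constructor
    rintro x ⟨i, j, h, hn⟩
    rcases h with ⟨h1, h2⟩ | ⟨h1, h2⟩ <;> simp_all

instance (a b r : ℕ) : DecidableRel (starRemovedBipartite a b r).Adj := fun _ _ =>
  Fintype.decidableExistsFintype

/-- The number of proper 3-colorings of `K_{a,b}` minus an `r`-edge star centered at a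
vertex of the `b`-side equals `3·2^a + 3·2^b + 6·(2^r - 2)`, provided
`1 ≤ r < a ≤ b` and `a, b ≥ 2`. -/
theorem star_removed_three_coloring_count (a b r : ℕ) (hr : 1 ≤ r) (hra : r < a)
    (hab : a ≤ b) (ha : 2 ≤ a) (hb : 2 ≤ b) :
    (Fintype.card {f : Fin a ⊕ Fin b → Fin 3 //
        ∀ v w, (starRemovedBipartite a b r).Adj v w → f v ≠ f w} : ℤ) =
      3 * 2 ^ a + 3 * 2 ^ b + 6 * (2 ^ r - 2) := by
  classical
  have hc1 := cardS1 (a := a) (hr.trans hra.le)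
  have hc2 := cardS2 (a := a) (r := r) hra
  have hc3 : (univ.filter fun g : Fin a → Fin 3 => ∃ d, ∀ i, g i ≠ d).card + 3
      = 3 * 2 ^ a := cardS3 (hr.trans hra.le)
  have hiff : ∀ f : Fin a ⊕ Fin b → Fin 3,
      (∀ v w, (starRemovedBipartite a b r).Adj v w → f v ≠ f w) ↔
      ∀ (i : Fin a) (j : Fin b), ¬((j : ℕ) = 0 ∧ (i : ℕ) < r) →
        f (Sum.inl i) ≠ f (Sum.inr j) := by
    intro f
    constructor
    · intro hP i j hc
      exact hP _ _ ⟨i, j, Or.inl ⟨rfl, rfl⟩, hc⟩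
    · rintro hP v w ⟨i, j, (⟨rfl, rfl⟩ | ⟨rfl, rfl⟩), hc⟩
      · exact hP i j hc
      · exact (hP i j hc).symm
  rw [Fintype.card_congr (Equiv.subtypeEquivRight hiff), main_count hra hb]
  -- pointwise rewrite of each summand
  have key : ∀ g : Fin a → Fin 3,
      (((univ.filter fun x : Fin 3 => ∀ i : Fin a, ¬(i : ℕ) < r → g i ≠ x).card
          * (univ.filter fun x : Fin 3 => ∀ i : Fin a, g i ≠ x).card ^ (b - 1) : ℕ) : ℤ)
      = (if (∃ c, ∀ i, g i = c) then (2 : ℤ) ^ b - 2 else 0)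
        + (if ((∃ d, ∀ i, g i ≠ d) ∧ ∃ c, ∀ i : Fin a, ¬(i : ℕ) < r → g i = c) then 1 else 0)
        + (if (∃ d, ∀ i, g i ≠ d) then 1 else 0) := by
    intro g
    have hplain : (univ.filter fun x : Fin 3 => ∀ i : Fin a, g i ≠ x)
        = univ.filter fun x : Fin 3 => ∀ i : Fin a, ¬(i : ℕ) < 0 → g i ≠ x := by
      apply Finset.filter_congr; rintro x -; simp
    set u := (univ.filter fun x : Fin 3 => ∀ i : Fin a, g i ≠ x).card with hu
    set v := (univ.filter fun x : Fin 3 => ∀ i : Fin a, ¬(i : ℕ) < r → g i ≠ x).card with hv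
    have huv : u ≤ v := by
      rw [hu, hv]
      apply Finset.card_le_card
      intro x hx
      simp only [mem_filter, mem_univ, true_and] at hx ⊢
      exact fun i _ => hx i
    have hv2 : v ≤ 2 := tail_card_le g hra
    have h1 : u = 2 ↔ ∃ c, ∀ i, g i = c := by
      rw [hu, hplain, tail_card_eq_two_iff g (Nat.lt_of_le_of_lt (Nat.zero_le r) hra)]
      simp
    have h2 : v = 2 ↔ ∃ c, ∀ i : Fin a, ¬(i : ℕ) < r → g i = c :=
      tail_card_eq_two_iff g hra
    have h3 : 1 ≤ u ↔ ∃ d, ∀ i, g i ≠ d := by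
      rw [hu, Nat.one_le_iff_ne_zero, ← Nat.pos_iff_ne_zero, Finset.card_pos,
        Finset.filter_nonempty_iff]
      simp
    rw [pointwise_id hb huv hv2,
      if_congr h1 rfl rfl, if_congr (and_congr h3 h2) rfl rfl, if_congr h3 rfl rfl]
  rw [show ((∑ g : Fin a → Fin 3,
      ((univ.filter fun x : Fin 3 => ∀ i : Fin a, ¬(i : ℕ) < r → g i ≠ x).card
        * (univ.filter fun x : Fin 3 => ∀ i : Fin a, g i ≠ x).card ^ (b - 1)) : ℕ) : ℤ)
      = ∑ g : Fin a → Fin 3,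
        (((univ.filter fun x : Fin 3 => ∀ i : Fin a, ¬(i : ℕ) < r → g i ≠ x).card
          * (univ.filter fun x : Fin 3 => ∀ i : Fin a, g i ≠ x).card ^ (b - 1) : ℕ) : ℤ)
      by push_cast; ring]
  rw [Finset.sum_congr rfl fun g _ => key g]
  rw [Finset.sum_add_distrib, Finset.sum_add_distrib]
  rw [← Finset.sum_filter (fun g : Fin a → Fin 3 => ∃ c, ∀ i, g i = c)
      (fun _ => ((2 : ℤ) ^ b - 2)),
    ← Finset.sum_filter (fun g : Fin a → Fin 3 =>
      (∃ d, ∀ i, g i ≠ d) ∧ ∃ c, ∀ i : Fin a, ¬(i : ℕ) < r → g i = c) (fun _ => (1 : ℤ)),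
    ← Finset.sum_filter (fun g : Fin a → Fin 3 => ∃ d, ∀ i, g i ≠ d) (fun _ => (1 : ℤ))]
  rw [Finset.sum_const, Finset.sum_const, Finset.sum_const]
  rw [hc1]
  have e2 : (((univ.filter fun g : Fin a → Fin 3 =>
      (∃ d, ∀ i, g i ≠ d) ∧ ∃ c, ∀ i : Fin a, ¬(i : ℕ) < r → g i = c).card : ℕ) : ℤ)
      = 6 * 2 ^ r - 3 := by
    have h' : (((univ.filter fun g : Fin a → Fin 3 =>
        (∃ d, ∀ i, g i ≠ d) ∧ ∃ c, ∀ i : Fin a, ¬(i : ℕ) < r → g i = c).card : ℕ) : ℤ)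
        + 3 = 6 * 2 ^ r := by exact_mod_cast congrArg (Nat.cast : ℕ → ℤ) hc2
    linarith
  have e3 : (((univ.filter fun g : Fin a → Fin 3 => ∃ d, ∀ i, g i ≠ d).card : ℕ) : ℤ)
      = 3 * 2 ^ a - 3 := by
    have h' : (((univ.filter fun g : Fin a → Fin 3 =>
        ∃ d, ∀ i, g i ≠ d).card : ℕ) : ℤ) + 3 = 3 * 2 ^ a := by
      exact_mod_cast congrArg (Nat.cast : ℕ → ℤ) hc3
    linarith
  rw [nsmul_eq_mul, nsmul_eq_mul, nsmul_eq_mul, e2, e3]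
  push_cast
  ring
end

section
/- Let a, b, t be positive integers with t ≥ 3 and b/a ≥ log t / log((t-1)/(t-2)). Then for every i ∈ {1, …, t-2}, the ratio (i^a·(t-i)^b) / ((i+1)^a·(t-i-1)^b) is at least 1.5^a. -/
/-- For positive integers `a, b, t` with `t ≥ 3` and `b/a ≥ log t / log((t-1)/(t-2))`,
and every `1 ≤ i ≤ t-2`, the ratio `(i^a (t-i)^b) / ((i+1)^a (t-i-1)^b)` is at
least `1.5^a`. -/
theorem product_ratio_bound (a b t : ℕ) (ha : 0 < a) (hb : 0 < b) (ht : 3 ≤ t)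
    (hba : ((b : ℝ) / a) ≥ Real.log t / Real.log (((t : ℝ) - 1) / ((t : ℝ) - 2)))
    (i : ℕ) (hi1 : 1 ≤ i) (hi2 : i ≤ t - 2) :
    (1.5 : ℝ) ^ a ≤
      ((i : ℝ) ^ a * ((t : ℝ) - i) ^ b) /
        (((i : ℝ) + 1) ^ a * ((t : ℝ) - i - 1) ^ b) := by
  have hit : i + 2 ≤ t := by omega
  have hitR : (i : ℝ) + 2 ≤ (t : ℝ) := by exact_mod_cast hit
  have htR : (3 : ℝ) ≤ (t : ℝ) := by exact_mod_cast ht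
  have hiR : (1 : ℝ) ≤ (i : ℝ) := by exact_mod_cast hi1
  have ht2 : (1 : ℝ) ≤ (t : ℝ) - 2 := by linarith
  have ht1 : (0 : ℝ) < (t : ℝ) - 1 := by linarith
  set r : ℝ := ((t : ℝ) - 1) / ((t : ℝ) - 2) with hr
  have hr1 : 1 < r := by
    rw [hr, lt_div_iff₀ (by linarith)]
    linarith
  have hlogr : 0 < Real.log r := Real.log_pos hr1
  have haR : (0 : ℝ) < (a : ℝ) := by exact_mod_cast ha
  have hkey : (a : ℝ) * Real.log t ≤ (b : ℝ) * Real.log r := by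
    have := (div_le_div_iff₀ hlogr haR).mp hba
    linarith
  have hpow : ((t : ℝ)) ^ a ≤ r ^ b := by
    have h1 : Real.log ((t : ℝ) ^ a) ≤ Real.log (r ^ b) := by
      rw [Real.log_pow, Real.log_pow]
      push_cast
      linarith
    have htpos : (0 : ℝ) < (t : ℝ) := by linarith
    exact (Real.log_le_log_iff (by positivity) (by positivity)).mp h1
  have hden1 : (0 : ℝ) < (t : ℝ) - i - 1 := by linarith
  have hrle : r ≤ ((t : ℝ) - i) / ((t : ℝ) - i - 1) := by
    rw [hr, div_le_div_iff₀ (by linarith) hden1]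
    nlinarith
  have hrpow : r ^ b ≤ (((t : ℝ) - i) / ((t : ℝ) - i - 1)) ^ b :=
    pow_le_pow_left₀ (le_of_lt (lt_trans one_pos hr1)) hrle b
  have hDpos : (0 : ℝ) < ((i : ℝ) + 1) ^ a * ((t : ℝ) - i - 1) ^ b := by positivity
  rw [le_div_iff₀ hDpos]
  have step1 : (1.5 : ℝ) ^ a * (((i : ℝ) + 1) ^ a * ((t : ℝ) - i - 1) ^ b)
      = (1.5 * ((i : ℝ) + 1)) ^ a * ((t : ℝ) - i - 1) ^ b := by
    rw [mul_pow]; ring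
  calc (1.5 : ℝ) ^ a * (((i : ℝ) + 1) ^ a * ((t : ℝ) - i - 1) ^ b)
      = (1.5 * ((i : ℝ) + 1)) ^ a * ((t : ℝ) - i - 1) ^ b := step1
    _ ≤ ((t : ℝ) * (i : ℝ)) ^ a * ((t : ℝ) - i - 1) ^ b := by
        apply mul_le_mul_of_nonneg_right _ (by positivity)
        apply pow_le_pow_left₀ (by linarith)
        nlinarith
    _ = (i : ℝ) ^ a * ((t : ℝ) ^ a * ((t : ℝ) - i - 1) ^ b) := by
        rw [mul_pow]; ring
    _ ≤ (i : ℝ) ^ a * ((((t : ℝ) - i) / ((t : ℝ) - i - 1)) ^ b * ((t : ℝ) - i - 1) ^ b) := by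
        apply mul_le_mul_of_nonneg_left _ (by positivity)
        apply mul_le_mul_of_nonneg_right (le_trans hpow hrpow) (by positivity)
    _ = (i : ℝ) ^ a * ((t : ℝ) - i) ^ b := by
        rw [div_pow, div_mul_cancel₀]
        positivity
end

section
/- Let m, n, t, v₁ be positive integers with m ≤ n²/4 and v₁(n - v₁) ≥ m - t. Let s be the largest integer satisfying s(n - s) ≥ m. Then s ≥ v₁ - ⌈√t⌉. -/
/-- Let `m, n, t, v₁` be positive integers with `4m ≤ n²` and `v₁(n - v₁) ≥ m - t`.
If `s` is the largest integer satisfying `s(n - s) ≥ m`, then `s ≥ v₁ - ⌈√t⌉`. -/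
theorem maxcut_size_bound (m n t v₁ : ℕ) (hm : 0 < m) (hn : 0 < n) (ht : 0 < t)
    (hv : 0 < v₁) (hmn : 4 * m ≤ n ^ 2)
    (hv1 : (v₁ : ℤ) * ((n : ℤ) - v₁) ≥ (m : ℤ) - t)
    (s : ℤ) (hs : s * ((n : ℤ) - s) ≥ m)
    (hmax : ∀ s' : ℤ, s' * ((n : ℤ) - s') ≥ m → s' ≤ s) :
    (v₁ : ℤ) - ⌈Real.sqrt t⌉ ≤ s := by
  set c : ℤ := ⌈Real.sqrt t⌉ with hcdef
  have hc : (0 : ℤ) ≤ c := Int.ceil_nonneg (Real.sqrt_nonneg _)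
  have hc2 : (t : ℤ) ≤ c ^ 2 := by
    have h1 : Real.sqrt t ≤ (c : ℝ) := Int.le_ceil _
    have h2 : (t : ℝ) ≤ (c : ℝ) ^ 2 := by
      nlinarith [Real.sq_sqrt (by positivity : (0:ℝ) ≤ (t:ℝ)), Real.sqrt_nonneg (t:ℝ)]
    exact_mod_cast h2
  have h2s : (n : ℤ) ≤ 2 * s := by
    have := hmax ((n : ℤ) - s) (by nlinarith)
    linarith
  by_contra hcon
  push_neg at hcon
  -- so s < v₁ - c
  set s' : ℤ := (v₁ : ℤ) - c with hs'def
  have hbig : (n : ℤ) + 2 ≤ 2 * s' := by omega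
  -- key: s'(n - s') ≥ m
  have hkey : s' * ((n : ℤ) - s') ≥ m := by
    have hid : s' * ((n : ℤ) - s') =
        (v₁ : ℤ) * ((n : ℤ) - v₁) + c * (2 * v₁ - n - c) := by
      rw [hs'def]; ring
    have hcc : c * (c + 2) ≤ c * (2 * v₁ - n - c) := by
      apply mul_le_mul_of_nonneg_left _ hc
      omega
    nlinarith
  have := hmax s' hkey
  omega
end

section
/- For every integer q ≥ 9, one has F_q(3) > 2·F_q(1)·(q-3)/(q-2), where F_q(x) = log(q/(q-x))·log(q/x). -/
noncomputable def Sq (x : ℝ) : ℝ :=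
  x + x^2/2 + x^3/3 + x^4/4 + x^5/5 + x^6/6 + x^7/7 + x^8/8 + x^9/9 + x^10/10
    + x^11/11 + x^12/12 + x^13/13 + x^14/14

lemma log_one_sub_bounds (x : ℝ) (h0 : 0 ≤ x) (h1 : x ≤ 1/2) :
    -(Sq x) - 2*x^15 ≤ Real.log (1-x) ∧ Real.log (1-x) ≤ -(Sq x) + 2*x^15 := by
  have hx : |x| < 1 := by rw [abs_of_nonneg h0]; linarith
  have h := Real.abs_log_sub_add_sum_range_le hx 14
  rw [abs_of_nonneg h0] at h
  have hsum : ∑ i ∈ Finset.range 14, x^(i+1)/((i:ℝ)+1) = Sq x := by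
    simp [Finset.sum_range_succ, Sq]
    norm_num
  have htail : x^(14+1)/(1-x) ≤ 2*x^15 := by
    rw [show (14+1)=15 from rfl, div_le_iff₀ (by linarith)]
    nlinarith [pow_nonneg h0 15]
  rw [abs_le, hsum] at h
  obtain ⟨hl, hr⟩ := h
  have htail2 : -(2*x^15) ≤ -(x^(14+1)/(1-x)) := by linarith
  constructor <;> linarith

lemma logb_3 : (1.0986122863 : ℝ) < Real.log 3 ∧ Real.log 3 < 1.0986122911 := by
  have heq : Real.log (3:ℝ) = 2 * Real.log 2 + Real.log (1 - (1/4 : ℝ)) := by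
    rw [show (3:ℝ) = 2^2 * (1 - (1/4 : ℝ)) by norm_num,
      Real.log_mul (by norm_num) (by norm_num), Real.log_pow]
    norm_num
  have hb := log_one_sub_bounds (1/4 : ℝ) (by norm_num) (by norm_num)
  have h2lo := Real.log_two_gt_d9
  have h2hi := Real.log_two_lt_d9
  rw [heq]
  norm_num [Sq] at hb ⊢
  constructor <;> linarith [hb.1, hb.2]

lemma logb_6 : (1.7917594666 : ℝ) < Real.log 6 ∧ Real.log 6 < 1.7917594719 := by
  have heq : Real.log (6:ℝ) = 3 * Real.log 2 + Real.log (1 - (1/4 : ℝ)) := by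
    rw [show (6:ℝ) = 2^3 * (1 - (1/4 : ℝ)) by norm_num,
      Real.log_mul (by norm_num) (by norm_num), Real.log_pow]
    norm_num
  have hb := log_one_sub_bounds (1/4 : ℝ) (by norm_num) (by norm_num)
  have h2lo := Real.log_two_gt_d9
  have h2hi := Real.log_two_lt_d9
  rw [heq]
  norm_num [Sq] at hb ⊢
  constructor <;> linarith [hb.1, hb.2]

lemma logb_7 : (1.9459101482 : ℝ) < Real.log 7 ∧ Real.log 7 < 1.9459101498 := by
  have heq : Real.log (7:ℝ) = 3 * Real.log 2 + Real.log (1 - (1/8 : ℝ)) := by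
    rw [show (7:ℝ) = 2^3 * (1 - (1/8 : ℝ)) by norm_num,
      Real.log_mul (by norm_num) (by norm_num), Real.log_pow]
    norm_num
  have hb := log_one_sub_bounds (1/8 : ℝ) (by norm_num) (by norm_num)
  have h2lo := Real.log_two_gt_d9
  have h2hi := Real.log_two_lt_d9
  rw [heq]
  norm_num [Sq] at hb ⊢
  constructor <;> linarith [hb.1, hb.2]

lemma logb_8 : (2.0794415409 : ℝ) < Real.log 8 ∧ Real.log 8 < 2.0794415424 := by
  have h2lo := Real.log_two_gt_d9
  have h2hi := Real.log_two_lt_d9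
  rw [show (8:ℝ) = 2^3 by norm_num, Real.log_pow]
  norm_num
  constructor <;> linarith

lemma logb_9 : (2.1972168068 : ℝ) < Real.log 9 ∧ Real.log 9 < 2.1972332803 := by
  have heq : Real.log (9:ℝ) = 4 * Real.log 2 + Real.log (1 - (7/16 : ℝ)) := by
    rw [show (9:ℝ) = 2^4 * (1 - (7/16 : ℝ)) by norm_num,
      Real.log_mul (by norm_num) (by norm_num), Real.log_pow]
    norm_num
  have hb := log_one_sub_bounds (7/16 : ℝ) (by norm_num) (by norm_num)
  have h2lo := Real.log_two_gt_d9
  have h2hi := Real.log_two_lt_d9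
  rw [heq]
  norm_num [Sq] at hb ⊢
  constructor <;> linarith [hb.1, hb.2]

lemma logb_10 : (2.3025843182 : ℝ) < Real.log 10 ∧ Real.log 10 < 2.3025859516 := by
  have heq : Real.log (10:ℝ) = 4 * Real.log 2 + Real.log (1 - (3/8 : ℝ)) := by
    rw [show (10:ℝ) = 2^4 * (1 - (3/8 : ℝ)) by norm_num,
      Real.log_mul (by norm_num) (by norm_num), Real.log_pow]
    norm_num
  have hb := log_one_sub_bounds (3/8 : ℝ) (by norm_num) (by norm_num)
  have h2lo := Real.log_two_gt_d9
  have h2hi := Real.log_two_lt_d9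
  rw [heq]
  norm_num [Sq] at hb ⊢
  constructor <;> linarith [hb.1, hb.2]

lemma logb_11 : (2.3978952213 : ℝ) < Real.log 11 ∧ Real.log 11 < 2.3978953292 := by
  have heq : Real.log (11:ℝ) = 4 * Real.log 2 + Real.log (1 - (5/16 : ℝ)) := by
    rw [show (11:ℝ) = 2^4 * (1 - (5/16 : ℝ)) by norm_num,
      Real.log_mul (by norm_num) (by norm_num), Real.log_pow]
    norm_num
  have hb := log_one_sub_bounds (5/16 : ℝ) (by norm_num) (by norm_num)
  have h2lo := Real.log_two_gt_d9
  have h2hi := Real.log_two_lt_d9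
  rw [heq]
  norm_num [Sq] at hb ⊢
  constructor <;> linarith [hb.1, hb.2]

lemma logb_12 : (2.4849066469 : ℝ) < Real.log 12 ∧ Real.log 12 < 2.4849066527 := by
  have heq : Real.log (12:ℝ) = 4 * Real.log 2 + Real.log (1 - (1/4 : ℝ)) := by
    rw [show (12:ℝ) = 2^4 * (1 - (1/4 : ℝ)) by norm_num,
      Real.log_mul (by norm_num) (by norm_num), Real.log_pow]
    norm_num
  have hb := log_one_sub_bounds (1/4 : ℝ) (by norm_num) (by norm_num)
  have h2lo := Real.log_two_gt_d9
  have h2hi := Real.log_two_lt_d9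
  rw [heq]
  norm_num [Sq] at hb ⊢
  constructor <;> linarith [hb.1, hb.2]

lemma logb_13 : (2.5649493563 : ℝ) < Real.log 13 ∧ Real.log 13 < 2.5649493585 := by
  have heq : Real.log (13:ℝ) = 4 * Real.log 2 + Real.log (1 - (3/16 : ℝ)) := by
    rw [show (13:ℝ) = 2^4 * (1 - (3/16 : ℝ)) by norm_num,
      Real.log_mul (by norm_num) (by norm_num), Real.log_pow]
    norm_num
  have hb := log_one_sub_bounds (3/16 : ℝ) (by norm_num) (by norm_num)
  have h2lo := Real.log_two_gt_d9
  have h2hi := Real.log_two_lt_d9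
  rw [heq]
  norm_num [Sq] at hb ⊢
  constructor <;> linarith [hb.1, hb.2]

lemma logb_14 : (2.6390573285 : ℝ) < Real.log 14 ∧ Real.log 14 < 2.6390573306 := by
  have heq : Real.log (14:ℝ) = 4 * Real.log 2 + Real.log (1 - (1/8 : ℝ)) := by
    rw [show (14:ℝ) = 2^4 * (1 - (1/8 : ℝ)) by norm_num,
      Real.log_mul (by norm_num) (by norm_num), Real.log_pow]
    norm_num
  have hb := log_one_sub_bounds (1/8 : ℝ) (by norm_num) (by norm_num)
  have h2lo := Real.log_two_gt_d9
  have h2hi := Real.log_two_lt_d9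
  rw [heq]
  norm_num [Sq] at hb ⊢
  constructor <;> linarith [hb.1, hb.2]

lemma logb_15 : (2.7080502000 : ℝ) < Real.log 15 ∧ Real.log 15 < 2.7080502021 := by
  have heq : Real.log (15:ℝ) = 4 * Real.log 2 + Real.log (1 - (1/16 : ℝ)) := by
    rw [show (15:ℝ) = 2^4 * (1 - (1/16 : ℝ)) by norm_num,
      Real.log_mul (by norm_num) (by norm_num), Real.log_pow]
    norm_num
  have hb := log_one_sub_bounds (1/16 : ℝ) (by norm_num) (by norm_num)
  have h2lo := Real.log_two_gt_d9
  have h2hi := Real.log_two_lt_d9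
  rw [heq]
  norm_num [Sq] at hb ⊢
  constructor <;> linarith [hb.1, hb.2]

lemma logb_16 : (2.7725887212 : ℝ) < Real.log 16 ∧ Real.log 16 < 2.7725887232 := by
  have h2lo := Real.log_two_gt_d9
  have h2hi := Real.log_two_lt_d9
  rw [show (16:ℝ) = 2^4 by norm_num, Real.log_pow]
  norm_num
  constructor <;> linarith

lemma logb_17 : (2.8331915424 : ℝ) < Real.log 17 ∧ Real.log 17 < 2.8332379088 := by
  have heq : Real.log (17:ℝ) = 5 * Real.log 2 + Real.log (1 - (15/32 : ℝ)) := by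
    rw [show (17:ℝ) = 2^5 * (1 - (15/32 : ℝ)) by norm_num,
      Real.log_mul (by norm_num) (by norm_num), Real.log_pow]
    norm_num
  have hb := log_one_sub_bounds (15/32 : ℝ) (by norm_num) (by norm_num)
  have h2lo := Real.log_two_gt_d9
  have h2hi := Real.log_two_lt_d9
  rw [heq]
  norm_num [Sq] at hb ⊢
  constructor <;> linarith [hb.1, hb.2]

lemma logb_18 : (2.8903639871 : ℝ) < Real.log 18 ∧ Real.log 18 < 2.8903804611 := by
  have heq : Real.log (18:ℝ) = 5 * Real.log 2 + Real.log (1 - (7/16 : ℝ)) := by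
    rw [show (18:ℝ) = 2^5 * (1 - (7/16 : ℝ)) by norm_num,
      Real.log_mul (by norm_num) (by norm_num), Real.log_pow]
    norm_num
  have hb := log_one_sub_bounds (7/16 : ℝ) (by norm_num) (by norm_num)
  have h2lo := Real.log_two_gt_d9
  have h2hi := Real.log_two_lt_d9
  rw [heq]
  norm_num [Sq] at hb ⊢
  constructor <;> linarith [hb.1, hb.2]

lemma logb_19 : (2.9444364142 : ℝ) < Real.log 19 ∧ Real.log 19 < 2.9444418363 := by
  have heq : Real.log (19:ℝ) = 5 * Real.log 2 + Real.log (1 - (13/32 : ℝ)) := by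
    rw [show (19:ℝ) = 2^5 * (1 - (13/32 : ℝ)) by norm_num,
      Real.log_mul (by norm_num) (by norm_num), Real.log_pow]
    norm_num
  have hb := log_one_sub_bounds (13/32 : ℝ) (by norm_num) (by norm_num)
  have h2lo := Real.log_two_gt_d9
  have h2hi := Real.log_two_lt_d9
  rw [heq]
  norm_num [Sq] at hb ⊢
  constructor <;> linarith [hb.1, hb.2]

lemma logb_20 : (2.9957314985 : ℝ) < Real.log 20 ∧ Real.log 20 < 2.9957331324 := by
  have heq : Real.log (20:ℝ) = 5 * Real.log 2 + Real.log (1 - (3/8 : ℝ)) := by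
    rw [show (20:ℝ) = 2^5 * (1 - (3/8 : ℝ)) by norm_num,
      Real.log_mul (by norm_num) (by norm_num), Real.log_pow]
    norm_num
  have hb := log_one_sub_bounds (3/8 : ℝ) (by norm_num) (by norm_num)
  have h2lo := Real.log_two_gt_d9
  have h2hi := Real.log_two_lt_d9
  rw [heq]
  norm_num [Sq] at hb ⊢
  constructor <;> linarith [hb.1, hb.2]

lemma logb_21 : (3.0445222261 : ℝ) < Real.log 21 ∧ Real.log 21 < 3.0445226710 := by
  have heq : Real.log (21:ℝ) = 5 * Real.log 2 + Real.log (1 - (11/32 : ℝ)) := by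
    rw [show (21:ℝ) = 2^5 * (1 - (11/32 : ℝ)) by norm_num,
      Real.log_mul (by norm_num) (by norm_num), Real.log_pow]
    norm_num
  have hb := log_one_sub_bounds (11/32 : ℝ) (by norm_num) (by norm_num)
  have h2lo := Real.log_two_gt_d9
  have h2hi := Real.log_two_lt_d9
  rw [heq]
  norm_num [Sq] at hb ⊢
  constructor <;> linarith [hb.1, hb.2]

lemma logb_22 : (3.0910424016 : ℝ) < Real.log 22 ∧ Real.log 22 < 3.0910425100 := by
  have heq : Real.log (22:ℝ) = 5 * Real.log 2 + Real.log (1 - (5/16 : ℝ)) := by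
    rw [show (22:ℝ) = 2^5 * (1 - (5/16 : ℝ)) by norm_num,
      Real.log_mul (by norm_num) (by norm_num), Real.log_pow]
    norm_num
  have hb := log_one_sub_bounds (5/16 : ℝ) (by norm_num) (by norm_num)
  have h2lo := Real.log_two_gt_d9
  have h2hi := Real.log_two_lt_d9
  rw [heq]
  norm_num [Sq] at hb ⊢
  constructor <;> linarith [hb.1, hb.2]

lemma logb_23 : (3.1354942042 : ℝ) < Real.log 23 ∧ Real.log 23 < 3.1354942286 := by
  have heq : Real.log (23:ℝ) = 5 * Real.log 2 + Real.log (1 - (9/32 : ℝ)) := by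
    rw [show (23:ℝ) = 2^5 * (1 - (9/32 : ℝ)) by norm_num,
      Real.log_mul (by norm_num) (by norm_num), Real.log_pow]
    norm_num
  have hb := log_one_sub_bounds (9/32 : ℝ) (by norm_num) (by norm_num)
  have h2lo := Real.log_two_gt_d9
  have h2hi := Real.log_two_lt_d9
  rw [heq]
  norm_num [Sq] at hb ⊢
  constructor <;> linarith [hb.1, hb.2]

lemma logb_24 : (3.1780538272 : ℝ) < Real.log 24 ∧ Real.log 24 < 3.1780538335 := by
  have heq : Real.log (24:ℝ) = 5 * Real.log 2 + Real.log (1 - (1/4 : ℝ)) := by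
    rw [show (24:ℝ) = 2^5 * (1 - (1/4 : ℝ)) by norm_num,
      Real.log_mul (by norm_num) (by norm_num), Real.log_pow]
    norm_num
  have hb := log_one_sub_bounds (1/4 : ℝ) (by norm_num) (by norm_num)
  have h2lo := Real.log_two_gt_d9
  have h2hi := Real.log_two_lt_d9
  rw [heq]
  norm_num [Sq] at hb ⊢
  constructor <;> linarith [hb.1, hb.2]

lemma logb_25 : (3.2188758233 : ℝ) < Real.log 25 ∧ Real.log 25 < 3.2188758264 := by
  have heq : Real.log (25:ℝ) = 5 * Real.log 2 + Real.log (1 - (7/32 : ℝ)) := by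
    rw [show (25:ℝ) = 2^5 * (1 - (7/32 : ℝ)) by norm_num,
      Real.log_mul (by norm_num) (by norm_num), Real.log_pow]
    norm_num
  have hb := log_one_sub_bounds (7/32 : ℝ) (by norm_num) (by norm_num)
  have h2lo := Real.log_two_gt_d9
  have h2hi := Real.log_two_lt_d9
  rw [heq]
  norm_num [Sq] at hb ⊢
  constructor <;> linarith [hb.1, hb.2]

lemma logb_26 : (3.2580965366 : ℝ) < Real.log 26 ∧ Real.log 26 < 3.2580965393 := by
  have heq : Real.log (26:ℝ) = 5 * Real.log 2 + Real.log (1 - (3/16 : ℝ)) := by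
    rw [show (26:ℝ) = 2^5 * (1 - (3/16 : ℝ)) by norm_num,
      Real.log_mul (by norm_num) (by norm_num), Real.log_pow]
    norm_num
  have hb := log_one_sub_bounds (3/16 : ℝ) (by norm_num) (by norm_num)
  have h2lo := Real.log_two_gt_d9
  have h2hi := Real.log_two_lt_d9
  rw [heq]
  norm_num [Sq] at hb ⊢
  constructor <;> linarith [hb.1, hb.2]

lemma logb_27 : (3.2958368647 : ℝ) < Real.log 27 ∧ Real.log 27 < 3.2958368673 := by
  have heq : Real.log (27:ℝ) = 5 * Real.log 2 + Real.log (1 - (5/32 : ℝ)) := by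
    rw [show (27:ℝ) = 2^5 * (1 - (5/32 : ℝ)) by norm_num,
      Real.log_mul (by norm_num) (by norm_num), Real.log_pow]
    norm_num
  have hb := log_one_sub_bounds (5/32 : ℝ) (by norm_num) (by norm_num)
  have h2lo := Real.log_two_gt_d9
  have h2hi := Real.log_two_lt_d9
  rw [heq]
  norm_num [Sq] at hb ⊢
  constructor <;> linarith [hb.1, hb.2]

set_option maxHeartbeats 1000000 in
/-- For every integer `q ≥ 9`,
`F_q(3) > 2·F_q(1)·(q-3)/(q-2)` where `F_q(x) = log(q/(q-x))·log(q/x)`. -/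
theorem Fq_three_gt (q : ℕ) (hq : 9 ≤ q) :
    Real.log ((q : ℝ) / ((q : ℝ) - 3)) * Real.log ((q : ℝ) / 3) >
      2 * (Real.log ((q : ℝ) / ((q : ℝ) - 1)) * Real.log (q : ℝ)) *
        (((q : ℝ) - 3) / ((q : ℝ) - 2)) := by
  have hq9 : (9:ℝ) ≤ (q:ℝ) := by exact_mod_cast hq
  have hQ0 : (0:ℝ) < (q:ℝ) := by linarith
  have h1p : (0:ℝ) < (q:ℝ) - 1 := by linarith
  have h2p : (0:ℝ) < (q:ℝ) - 2 := by linarith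
  have h3p : (0:ℝ) < (q:ℝ) - 3 := by linarith
  rw [Real.log_div (ne_of_gt hQ0) (ne_of_gt h3p),
      Real.log_div (ne_of_gt hQ0) (by norm_num : (3:ℝ) ≠ 0),
      Real.log_div (ne_of_gt hQ0) (ne_of_gt h1p), gt_iff_lt,
      show 2 * ((Real.log (q:ℝ) - Real.log ((q:ℝ)-1)) * Real.log (q:ℝ)) *
        (((q:ℝ)-3)/((q:ℝ)-2)) =
        (2 * ((Real.log (q:ℝ) - Real.log ((q:ℝ)-1)) * Real.log (q:ℝ)) * ((q:ℝ)-3))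
          / ((q:ℝ)-2) by ring,
      div_lt_iff₀ h2p]
  rcases lt_or_ge q 28 with h | h
  · interval_cases q
    · -- q = 9
      have b1 := logb_9; have b2 := logb_6; have b3 := logb_3; have b4 := logb_8
      push_cast
      norm_num only
      have hA : (4054573349/10000000000 : ℝ) < Real.log 9 - Real.log 6 := by linarith
      have hB : (10986045157/10000000000 : ℝ) < Real.log 9 - Real.log 3 := by linarith
      have hC : Real.log 9 - Real.log 8 < (588958697/5000000000 : ℝ) := by linarith
      have hD : Real.log 9 < (21972332803/10000000000 : ℝ) := by linarith
      have hCp : (0:ℝ) ≤ Real.log 9 - Real.log 8 := by linarith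
      have hDp : (0:ℝ) ≤ Real.log 9 := by linarith
      have p1 := mul_lt_mul'' hA hB (by norm_num) (by norm_num)
      have p2 := mul_lt_mul'' hC hD hCp hDp
      linarith [p1, p2]
    · -- q = 10
      have b1 := logb_10; have b2 := logb_7; have b3 := logb_3; have b4 := logb_9
      push_cast
      norm_num only
      have hA : (891685421/2500000000 : ℝ) < Real.log 10 - Real.log 7 := by linarith
      have hB : (12039720271/10000000000 : ℝ) < Real.log 10 - Real.log 3 := by linarith
      have hC : Real.log 10 - Real.log 9 < (131711431/1250000000 : ℝ) := by linarith
      have hD : Real.log 10 < (5756464879/2500000000 : ℝ) := by linarith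
      have hCp : (0:ℝ) ≤ Real.log 10 - Real.log 9 := by linarith
      have hDp : (0:ℝ) ≤ Real.log 10 := by linarith
      have p1 := mul_lt_mul'' hA hB (by norm_num) (by norm_num)
      have p2 := mul_lt_mul'' hC hD hCp hDp
      linarith [p1, p2]
    · -- q = 11
      have b1 := logb_11; have b2 := logb_8; have b3 := logb_3; have b4 := logb_10
      push_cast
      norm_num only
      have hA : (3184536789/10000000000 : ℝ) < Real.log 11 - Real.log 8 := by linarith
      have hB : (6496414651/5000000000 : ℝ) < Real.log 11 - Real.log 3 := by linarith
      have hC : Real.log 11 - Real.log 10 < (95311011/1000000000 : ℝ) := by linarith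
      have hD : Real.log 11 < (5994738323/2500000000 : ℝ) := by linarith
      have hCp : (0:ℝ) ≤ Real.log 11 - Real.log 10 := by linarith
      have hDp : (0:ℝ) ≤ Real.log 11 := by linarith
      have p1 := mul_lt_mul'' hA hB (by norm_num) (by norm_num)
      have p2 := mul_lt_mul'' hC hD hCp hDp
      linarith [p1, p2]
    · -- q = 12
      have b1 := logb_12; have b2 := logb_9; have b3 := logb_3; have b4 := logb_11
      push_cast
      norm_num only
      have hA : (1438366833/5000000000 : ℝ) < Real.log 12 - Real.log 9 := by linarith
      have hB : (6931471779/5000000000 : ℝ) < Real.log 12 - Real.log 3 := by linarith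
      have hC : Real.log 12 - Real.log 11 < (435057157/5000000000 : ℝ) := by linarith
      have hD : Real.log 12 < (24849066527/10000000000 : ℝ) := by linarith
      have hCp : (0:ℝ) ≤ Real.log 12 - Real.log 11 := by linarith
      have hDp : (0:ℝ) ≤ Real.log 12 := by linarith
      have p1 := mul_lt_mul'' hA hB (by norm_num) (by norm_num)
      have p2 := mul_lt_mul'' hC hD hCp hDp
      linarith [p1, p2]
    · -- q = 13
      have b1 := logb_13; have b2 := logb_10; have b3 := logb_3; have b4 := logb_12
      push_cast
      norm_num only
      have hA : (2623634047/10000000000 : ℝ) < Real.log 13 - Real.log 10 := by linarith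
      have hB : (3665842663/2500000000 : ℝ) < Real.log 13 - Real.log 3 := by linarith
      have hC : Real.log 13 - Real.log 12 < (200106779/2500000000 : ℝ) := by linarith
      have hD : Real.log 13 < (5129898717/2000000000 : ℝ) := by linarith
      have hCp : (0:ℝ) ≤ Real.log 13 - Real.log 12 := by linarith
      have hDp : (0:ℝ) ≤ Real.log 13 := by linarith
      have p1 := mul_lt_mul'' hA hB (by norm_num) (by norm_num)
      have p2 := mul_lt_mul'' hC hD hCp hDp
      linarith [p1, p2]
    · -- q = 14
      have b1 := logb_14; have b2 := logb_11; have b3 := logb_3; have b4 := logb_13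
      push_cast
      norm_num only
      have hA : (2411619993/10000000000 : ℝ) < Real.log 14 - Real.log 11 := by linarith
      have hB : (7702225187/5000000000 : ℝ) < Real.log 14 - Real.log 3 := by linarith
      have hC : Real.log 14 - Real.log 13 < (741079743/10000000000 : ℝ) := by linarith
      have hD : Real.log 14 < (13195286653/5000000000 : ℝ) := by linarith
      have hCp : (0:ℝ) ≤ Real.log 14 - Real.log 13 := by linarith
      have hDp : (0:ℝ) ≤ Real.log 14 := by linarith
      have p1 := mul_lt_mul'' hA hB (by norm_num) (by norm_num)
      have p2 := mul_lt_mul'' hC hD hCp hDp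
      linarith [p1, p2]
    · -- q = 15
      have b1 := logb_15; have b2 := logb_12; have b3 := logb_3; have b4 := logb_14
      push_cast
      norm_num only
      have hA : (2231435473/10000000000 : ℝ) < Real.log 15 - Real.log 12 := by linarith
      have hB : (16094379089/10000000000 : ℝ) < Real.log 15 - Real.log 3 := by linarith
      have hC : Real.log 15 - Real.log 14 < (21560273/312500000 : ℝ) := by linarith
      have hD : Real.log 15 < (27080502021/10000000000 : ℝ) := by linarith
      have hCp : (0:ℝ) ≤ Real.log 15 - Real.log 14 := by linarith
      have hDp : (0:ℝ) ≤ Real.log 15 := by linarith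
      have p1 := mul_lt_mul'' hA hB (by norm_num) (by norm_num)
      have p2 := mul_lt_mul'' hC hD hCp hDp
      linarith [p1, p2]
    · -- q = 16
      have b1 := logb_16; have b2 := logb_13; have b3 := logb_3; have b4 := logb_15
      push_cast
      norm_num only
      have hA : (2076393627/10000000000 : ℝ) < Real.log 16 - Real.log 13 := by linarith
      have hB : (16739764301/10000000000 : ℝ) < Real.log 16 - Real.log 3 := by linarith
      have hC : Real.log 16 - Real.log 15 < (40336577/625000000 : ℝ) := by linarith
      have hD : Real.log 16 < (108304247/39062500 : ℝ) := by linarith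
      have hCp : (0:ℝ) ≤ Real.log 16 - Real.log 15 := by linarith
      have hDp : (0:ℝ) ≤ Real.log 16 := by linarith
      have p1 := mul_lt_mul'' hA hB (by norm_num) (by norm_num)
      have p2 := mul_lt_mul'' hC hD hCp hDp
      linarith [p1, p2]
    · -- q = 17
      have b1 := logb_17; have b2 := logb_14; have b3 := logb_3; have b4 := logb_16
      push_cast
      norm_num only
      have hA : (970671059/5000000000 : ℝ) < Real.log 17 - Real.log 14 := by linarith
      have hB : (17345792513/10000000000 : ℝ) < Real.log 17 - Real.log 3 := by linarith
      have hC : Real.log 17 - Real.log 16 < (151622969/2500000000 : ℝ) := by linarith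
      have hD : Real.log 17 < (1770773693/625000000 : ℝ) := by linarith
      have hCp : (0:ℝ) ≤ Real.log 17 - Real.log 16 := by linarith
      have hDp : (0:ℝ) ≤ Real.log 17 := by linarith
      have p1 := mul_lt_mul'' hA hB (by norm_num) (by norm_num)
      have p2 := mul_lt_mul'' hC hD hCp hDp
      linarith [p1, p2]
    · -- q = 18
      have b1 := logb_18; have b2 := logb_15; have b3 := logb_3; have b4 := logb_17
      push_cast
      norm_num only
      have hA : (36462757/200000000 : ℝ) < Real.log 18 - Real.log 15 := by linarith
      have hB : (111984481/62500000 : ℝ) < Real.log 18 - Real.log 3 := by linarith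
      have hC : Real.log 18 - Real.log 17 < (571889187/10000000000 : ℝ) := by linarith
      have hD : Real.log 18 < (28903804611/10000000000 : ℝ) := by linarith
      have hCp : (0:ℝ) ≤ Real.log 18 - Real.log 17 := by linarith
      have hDp : (0:ℝ) ≤ Real.log 18 := by linarith
      have p1 := mul_lt_mul'' hA hB (by norm_num) (by norm_num)
      have p2 := mul_lt_mul'' hC hD hCp hDp
      linarith [p1, p2]
    · -- q = 19
      have b1 := logb_19; have b2 := logb_16; have b3 := logb_3; have b4 := logb_18
      push_cast
      norm_num only
      have hA : (171847691/1000000000 : ℝ) < Real.log 19 - Real.log 16 := by linarith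
      have hB : (18458241231/10000000000 : ℝ) < Real.log 19 - Real.log 3 := by linarith
      have hC : Real.log 19 - Real.log 18 < (135194623/2500000000 : ℝ) := by linarith
      have hD : Real.log 19 < (29444418363/10000000000 : ℝ) := by linarith
      have hCp : (0:ℝ) ≤ Real.log 19 - Real.log 18 := by linarith
      have hDp : (0:ℝ) ≤ Real.log 19 := by linarith
      have p1 := mul_lt_mul'' hA hB (by norm_num) (by norm_num)
      have p2 := mul_lt_mul'' hC hD hCp hDp
      linarith [p1, p2]
    · -- q = 20
      have b1 := logb_20; have b2 := logb_17; have b3 := logb_3; have b4 := logb_19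
      push_cast
      norm_num only
      have hA : (1624935897/10000000000 : ℝ) < Real.log 20 - Real.log 17 := by linarith
      have hB : (9485596037/5000000000 : ℝ) < Real.log 20 - Real.log 3 := by linarith
      have hC : Real.log 20 - Real.log 19 < (256483591/5000000000 : ℝ) := by linarith
      have hD : Real.log 20 < (7489332831/2500000000 : ℝ) := by linarith
      have hCp : (0:ℝ) ≤ Real.log 20 - Real.log 19 := by linarith
      have hDp : (0:ℝ) ≤ Real.log 20 := by linarith
      have p1 := mul_lt_mul'' hA hB (by norm_num) (by norm_num)
      have p2 := mul_lt_mul'' hC hD hCp hDp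
      linarith [p1, p2]
    · -- q = 21
      have b1 := logb_21; have b2 := logb_18; have b3 := logb_3; have b4 := logb_20
      push_cast
      norm_num only
      have hA : (30828353/200000000 : ℝ) < Real.log 21 - Real.log 18 := by linarith
      have hB : (389181987/200000000 : ℝ) < Real.log 21 - Real.log 3 := by linarith
      have hC : Real.log 21 - Real.log 20 < (19516469/400000000 : ℝ) := by linarith
      have hD : Real.log 21 < (3044522671/1000000000 : ℝ) := by linarith
      have hCp : (0:ℝ) ≤ Real.log 21 - Real.log 20 := by linarith
      have hDp : (0:ℝ) ≤ Real.log 21 := by linarith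
      have p1 := mul_lt_mul'' hA hB (by norm_num) (by norm_num)
      have p2 := mul_lt_mul'' hC hD hCp hDp
      linarith [p1, p2]
    · -- q = 22
      have b1 := logb_22; have b2 := logb_19; have b3 := logb_3; have b4 := logb_21
      push_cast
      norm_num only
      have hA : (1466005653/10000000000 : ℝ) < Real.log 22 - Real.log 19 := by linarith
      have hB : (3984860221/2000000000 : ℝ) < Real.log 22 - Real.log 3 := by linarith
      have hC : Real.log 22 - Real.log 21 < (465202839/10000000000 : ℝ) := by linarith
      have hD : Real.log 22 < (309104251/100000000 : ℝ) := by linarith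
      have hCp : (0:ℝ) ≤ Real.log 22 - Real.log 21 := by linarith
      have hDp : (0:ℝ) ≤ Real.log 22 := by linarith
      have p1 := mul_lt_mul'' hA hB (by norm_num) (by norm_num)
      have p2 := mul_lt_mul'' hC hD hCp hDp
      linarith [p1, p2]
    · -- q = 23
      have b1 := logb_23; have b2 := logb_20; have b3 := logb_3; have b4 := logb_22
      push_cast
      norm_num only
      have hA : (698805359/5000000000 : ℝ) < Real.log 23 - Real.log 20 := by linarith
      have hB : (20368819131/10000000000 : ℝ) < Real.log 23 - Real.log 3 := by linarith
      have hC : Real.log 23 - Real.log 22 < (44451827/1000000000 : ℝ) := by linarith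
      have hD : Real.log 23 < (15677471143/5000000000 : ℝ) := by linarith
      have hCp : (0:ℝ) ≤ Real.log 23 - Real.log 22 := by linarith
      have hDp : (0:ℝ) ≤ Real.log 23 := by linarith
      have p1 := mul_lt_mul'' hA hB (by norm_num) (by norm_num)
      have p2 := mul_lt_mul'' hC hD hCp hDp
      linarith [p1, p2]
    · -- q = 24
      have b1 := logb_24; have b2 := logb_21; have b3 := logb_3; have b4 := logb_23
      push_cast
      norm_num only
      have hA : (667655781/5000000000 : ℝ) < Real.log 24 - Real.log 21 := by linarith
      have hB : (20794415361/10000000000 : ℝ) < Real.log 24 - Real.log 3 := by linarith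
      have hC : Real.log 24 - Real.log 23 < (425596293/10000000000 : ℝ) := by linarith
      have hD : Real.log 24 < (6356107667/2000000000 : ℝ) := by linarith
      have hCp : (0:ℝ) ≤ Real.log 24 - Real.log 23 := by linarith
      have hDp : (0:ℝ) ≤ Real.log 24 := by linarith
      have p1 := mul_lt_mul'' hA hB (by norm_num) (by norm_num)
      have p2 := mul_lt_mul'' hC hD hCp hDp
      linarith [p1, p2]
    · -- q = 25
      have b1 := logb_25; have b2 := logb_22; have b3 := logb_3; have b4 := logb_24
      push_cast
      norm_num only
      have hA : (1278333133/10000000000 : ℝ) < Real.log 25 - Real.log 22 := by linarith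
      have hB : (10601317661/5000000000 : ℝ) < Real.log 25 - Real.log 3 := by linarith
      have hC : Real.log 25 - Real.log 24 < (51027499/1250000000 : ℝ) := by linarith
      have hD : Real.log 25 < (4023594783/1250000000 : ℝ) := by linarith
      have hCp : (0:ℝ) ≤ Real.log 25 - Real.log 24 := by linarith
      have hDp : (0:ℝ) ≤ Real.log 25 := by linarith
      have p1 := mul_lt_mul'' hA hB (by norm_num) (by norm_num)
      have p2 := mul_lt_mul'' hC hD hCp hDp
      linarith [p1, p2]
    · -- q = 26
      have b1 := logb_26; have b2 := logb_23; have b3 := logb_3; have b4 := logb_25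
      push_cast
      norm_num only
      have hA : (30650577/250000000 : ℝ) < Real.log 26 - Real.log 23 := by linarith
      have hB : (4318968491/2000000000 : ℝ) < Real.log 26 - Real.log 3 := by linarith
      have hC : Real.log 26 - Real.log 25 < (9805179/250000000 : ℝ) := by linarith
      have hD : Real.log 26 < (32580965393/10000000000 : ℝ) := by linarith
      have hCp : (0:ℝ) ≤ Real.log 26 - Real.log 25 := by linarith
      have hDp : (0:ℝ) ≤ Real.log 26 := by linarith
      have p1 := mul_lt_mul'' hA hB (by norm_num) (by norm_num)
      have p2 := mul_lt_mul'' hC hD hCp hDp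
      linarith [p1, p2]
    · -- q = 27
      have b1 := logb_27; have b2 := logb_24; have b3 := logb_3; have b4 := logb_26
      push_cast
      norm_num only
      have hA : (147228789/1250000000 : ℝ) < Real.log 27 - Real.log 24 := by linarith
      have hB : (2746530717/1250000000 : ℝ) < Real.log 27 - Real.log 3 := by linarith
      have hC : Real.log 27 - Real.log 26 < (377403307/10000000000 : ℝ) := by linarith
      have hD : Real.log 27 < (32958368673/10000000000 : ℝ) := by linarith
      have hCp : (0:ℝ) ≤ Real.log 27 - Real.log 26 := by linarith
      have hDp : (0:ℝ) ≤ Real.log 27 := by linarith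
      have p1 := mul_lt_mul'' hA hB (by norm_num) (by norm_num)
      have p2 := mul_lt_mul'' hC hD hCp hDp
      linarith [p1, p2]
  · -- q ≥ 28
    have hQ : (28:ℝ) ≤ (q:ℝ) := by exact_mod_cast h
    have ha3 : (0:ℝ) < Real.log 3 := Real.log_pos (by norm_num)
    have htb : Real.log ((q:ℝ)-1) < Real.log (q:ℝ) := Real.log_lt_log h1p (by linarith)
    have hm1 : Real.log (q:ℝ) + Real.log ((q:ℝ)-2)
        ≤ Real.log ((q:ℝ)-1) + Real.log ((q:ℝ)-1) := by
      have := Real.log_le_log (by nlinarith) (by nlinarith :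
        (q:ℝ) * ((q:ℝ)-2) ≤ ((q:ℝ)-1) * ((q:ℝ)-1))
      rwa [Real.log_mul (ne_of_gt hQ0) (ne_of_gt h2p),
        Real.log_mul (ne_of_gt h1p) (ne_of_gt h1p)] at this
    have hm2 : Real.log (q:ℝ) + Real.log ((q:ℝ)-3)
        ≤ Real.log ((q:ℝ)-1) + Real.log ((q:ℝ)-2) := by
      have := Real.log_le_log (by nlinarith) (by nlinarith :
        (q:ℝ) * ((q:ℝ)-3) ≤ ((q:ℝ)-1) * ((q:ℝ)-2))
      rwa [Real.log_mul (ne_of_gt hQ0) (ne_of_gt h3p),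
        Real.log_mul (ne_of_gt h1p) (ne_of_gt h2p)] at this
    have h3bd : 3*(Real.log (q:ℝ) - Real.log ((q:ℝ)-1))
        ≤ Real.log (q:ℝ) - Real.log ((q:ℝ)-3) := by linarith
    have h27 : 3 * Real.log 3 < Real.log (q:ℝ) := by
      have h1 : Real.log 27 < Real.log (q:ℝ) := Real.log_lt_log (by norm_num) (by linarith)
      have h2 : Real.log (27:ℝ) = 3 * Real.log 3 := by
        rw [show (27:ℝ) = 3^3 by norm_num, Real.log_pow]; norm_num
      linarith
    have k2 : (0:ℝ) < (Real.log (q:ℝ) - Real.log ((q:ℝ)-1)) *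
        (Real.log (q:ℝ)*(q:ℝ) - 3*Real.log 3*((q:ℝ)-2)) := by
      have hp : (0:ℝ) < (Real.log (q:ℝ) - 3*Real.log 3) * (q:ℝ) :=
        mul_pos (by linarith) hQ0
      nlinarith
    have k1 : (0:ℝ) ≤ (Real.log (q:ℝ) - Real.log ((q:ℝ)-3)
          - 3*(Real.log (q:ℝ) - Real.log ((q:ℝ)-1))) *
        ((Real.log (q:ℝ) - Real.log 3) * ((q:ℝ)-2)) := by
      apply mul_nonneg (by linarith)
      apply mul_nonneg (by linarith) (by linarith)
    nlinarith [k1, k2]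
end

section
/- Fix an integer q ≥ 3 and an integer a with 1 ≤ a ≤ q/2. For all reals α, β ≥ 0 with αβ ≥ 1, one has α·log(q/a) + β·log(q/(q-a)) ≥ 2·√(log(q/(q-1))·log q), with equality possible only if a = 1. -/
private lemma pow_aux (Q : ℝ) (hQ : 2 ≤ Q) :
    ∀ a : ℕ, 1 ≤ a → (a : ℝ) ≤ Q → Q ^ a * (Q - a) ≤ Q * (Q - 1) ^ a := by
  intro a
  induction a with
  | zero => omega
  | succ n ih =>
    intro _ hle
    rcases Nat.eq_zero_or_pos n with h0 | h1
    · subst h0; norm_num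
    · have hn1 : (1:ℝ) ≤ (n:ℝ) := by exact_mod_cast h1
      have hn : (n : ℝ) ≤ Q := by push_cast at hle ⊢; linarith
      have hstep : Q * (Q - (n + 1 : ℕ)) ≤ (Q - n) * (Q - 1) := by
        push_cast
        nlinarith
      have hQp : (0:ℝ) < Q := by linarith
      calc Q ^ (n+1) * (Q - (n+1 : ℕ)) = Q ^ n * (Q * (Q - (n+1 : ℕ))) := by ring
        _ ≤ Q ^ n * ((Q - n) * (Q - 1)) := by
            apply mul_le_mul_of_nonneg_left hstep (by positivity)
        _ = (Q ^ n * (Q - n)) * (Q - 1) := by ring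
        _ ≤ (Q * (Q - 1) ^ n) * (Q - 1) := by
            apply mul_le_mul_of_nonneg_right (ih h1 hn) (by linarith)
        _ = Q * (Q - 1) ^ (n+1) := by ring

private lemma pow_aux_strict (Q : ℝ) (hQ : 2 ≤ Q) :
    ∀ a : ℕ, 2 ≤ a → (a : ℝ) ≤ Q → Q ^ a * (Q - a) < Q * (Q - 1) ^ a := by
  intro a
  induction a with
  | zero => omega
  | succ n ih =>
    intro h2 hle
    have h1 : 1 ≤ n := by omega
    have hn1 : (1:ℝ) ≤ (n:ℝ) := by exact_mod_cast h1
    have hn : (n : ℝ) ≤ Q := by push_cast at hle ⊢; linarith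
    have hQp : (0:ℝ) < Q := by linarith
    have hstep : Q * (Q - (n + 1 : ℕ)) < (Q - n) * (Q - 1) := by
      push_cast
      nlinarith
    calc Q ^ (n+1) * (Q - (n+1 : ℕ)) = Q ^ n * (Q * (Q - (n+1 : ℕ))) := by ring
      _ < Q ^ n * ((Q - n) * (Q - 1)) := by
          apply mul_lt_mul_of_pos_left hstep (by positivity)
      _ = (Q ^ n * (Q - n)) * (Q - 1) := by ring
      _ ≤ (Q * (Q - 1) ^ n) * (Q - 1) := by
          apply mul_le_mul_of_nonneg_right (pow_aux Q hQ n h1 hn) (by linarith)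
      _ = Q * (Q - 1) ^ (n+1) := by ring

private lemma nat_pow_ineq (q a : ℕ) (ha : 1 ≤ a) (ha2 : 2 * a ≤ q) :
    a ^ a ≤ q ^ (a - 1) := by
  have h1 : a ≤ 2 ^ (a - 1) := by
    have := @Nat.lt_two_pow_self (a - 1)
    omega
  calc a ^ a = a ^ (a - 1 + 1) := by rw [show a - 1 + 1 = a from by omega]
    _ = a * a ^ (a - 1) := by rw [pow_succ]; ring
    _ ≤ 2 ^ (a-1) * a ^ (a-1) := Nat.mul_le_mul_right _ h1
    _ = (2 * a) ^ (a-1) := by rw [mul_pow]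
    _ ≤ q ^ (a-1) := Nat.pow_le_pow_left ha2 _

set_option maxHeartbeats 1000000 in
/-- Fix an integer `q ≥ 3` and an integer `a` with `1 ≤ a ≤ q/2`. For all nonnegative
reals `α, β` with `αβ ≥ 1`, one has
`α·log(q/a) + β·log(q/(q-a)) ≥ 2·√(log(q/(q-1))·log q)`, with equality possible
only if `a = 1`. -/
theorem two_set_partition_bound (q a : ℕ) (hq : 3 ≤ q) (ha : 1 ≤ a) (ha2 : 2 * a ≤ q) :
    (∀ α β : ℝ, 0 ≤ α → 0 ≤ β → 1 ≤ α * β →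
        2 * Real.sqrt (Real.log ((q : ℝ) / ((q : ℝ) - 1)) * Real.log q) ≤
          α * Real.log ((q : ℝ) / a) + β * Real.log ((q : ℝ) / ((q : ℝ) - a))) ∧
      (∀ α β : ℝ, 0 ≤ α → 0 ≤ β → 1 ≤ α * β →
        α * Real.log ((q : ℝ) / a) + β * Real.log ((q : ℝ) / ((q : ℝ) - a)) =
            2 * Real.sqrt (Real.log ((q : ℝ) / ((q : ℝ) - 1)) * Real.log q) →
        a = 1) := by
  set Q : ℝ := (q : ℝ) with hQdef
  have hQ3 : (3:ℝ) ≤ Q := by rw [hQdef]; exact_mod_cast hq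
  have haQ : (a : ℝ) * 2 ≤ Q := by
    have : ((2*a : ℕ) : ℝ) ≤ Q := by rw [hQdef]; exact_mod_cast ha2
    push_cast at this; linarith
  have ha1 : (1:ℝ) ≤ (a:ℝ) := by exact_mod_cast ha
  have haQ' : (a:ℝ) < Q := by linarith
  have hQa_pos : (0:ℝ) < Q - a := by linarith
  have hQpos : (0:ℝ) < Q := by linarith
  have hapos : (0:ℝ) < (a:ℝ) := by linarith
  set A : ℝ := Real.log (Q / a) with hA
  set B : ℝ := Real.log (Q / (Q - a)) with hB
  set L : ℝ := Real.log Q with hL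
  set B1 : ℝ := Real.log (Q / (Q - 1)) with hB1
  have hLpos : 0 < L := Real.log_pos (by linarith)
  have hB1pos : 0 < B1 := Real.log_pos (by
    rw [lt_div_iff₀ (by linarith)]; linarith)
  have hAnn : 0 ≤ A := Real.log_nonneg (by
    rw [le_div_iff₀ hapos]; linarith)
  have hBnn : 0 ≤ B := Real.log_nonneg (by
    rw [le_div_iff₀ hQa_pos]; linarith)
  -- a * A ≥ L
  have hAL : L ≤ (a:ℝ) * A := by
    have hnat : (a:ℕ) ^ a ≤ q ^ (a - 1) := nat_pow_ineq q a ha ha2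
    have hcast : ((a:ℝ)) ^ a ≤ Q ^ (a - 1) := by
      rw [hQdef]; exact_mod_cast hnat
    have hlog : (a:ℝ) * Real.log a ≤ ((a:ℕ) - 1 : ℕ) * L := by
      have := Real.log_le_log (by positivity) hcast
      rwa [Real.log_pow, Real.log_pow] at this
    have hc : (((a:ℕ) - 1 : ℕ) : ℝ) = (a:ℝ) - 1 := by
      push_cast [Nat.cast_sub ha]; ring
    rw [hc] at hlog
    have : A = L - Real.log a := by
      rw [hA, Real.log_div (ne_of_gt hQpos) (ne_of_gt hapos)]
    rw [this]; nlinarith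
  -- B ≥ a * B1 (strict for 2 ≤ a)
  have hpow_to_B : Q ^ a * (Q - a) ≤ Q * (Q - 1) ^ a → (a:ℝ) * B1 ≤ B := by
    intro hpw
    have h1 : (Q / (Q - 1)) ^ a ≤ Q / (Q - a) := by
      rw [div_pow, div_le_div_iff₀ (pow_pos (by linarith : (0:ℝ) < Q - 1) a) hQa_pos]
      linarith [hpw]
    have := Real.log_le_log (pow_pos (div_pos hQpos (by linarith)) a) h1
    rwa [Real.log_pow] at this
  have hpow_to_B' : Q ^ a * (Q - a) < Q * (Q - 1) ^ a → (a:ℝ) * B1 < B := by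
    intro hpw
    have h1 : (Q / (Q - 1)) ^ a < Q / (Q - a) := by
      rw [div_pow, div_lt_div_iff₀ (pow_pos (by linarith : (0:ℝ) < Q - 1) a) hQa_pos]
      linarith [hpw]
    have := Real.log_lt_log (pow_pos (div_pos hQpos (by linarith)) a) h1
    rwa [Real.log_pow] at this
  have hBa : (a:ℝ) * B1 ≤ B :=
    hpow_to_B (pow_aux Q (by linarith) a ha (by linarith))
  -- key products
  have hkey : B1 * L ≤ A * B := by
    have h1 : L * ((a:ℝ) * B1) ≤ ((a:ℝ) * A) * ((a:ℝ) * B1) :=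
      mul_le_mul_of_nonneg_right hAL (by positivity)
    have h2 : ((a:ℝ) * A) * ((a:ℝ) * B1) ≤ ((a:ℝ) * A) * B := by
      apply mul_le_mul_of_nonneg_left hBa
      nlinarith
    nlinarith
  have hkey' : 2 ≤ a → B1 * L < A * B := by
    intro h2a
    have hBa' : (a:ℝ) * B1 < B :=
      hpow_to_B' (pow_aux_strict Q (by linarith) a h2a (by linarith))
    have hApos : 0 < A := by nlinarith
    have h2 : ((a:ℝ) * A) * ((a:ℝ) * B1) < ((a:ℝ) * A) * B :=
      mul_lt_mul_of_pos_left hBa' (by positivity)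
    nlinarith
  -- AM-GM part
  have hAMGM : ∀ α β : ℝ, 0 ≤ α → 0 ≤ β → 1 ≤ α * β →
      2 * Real.sqrt (A * B) ≤ α * A + β * B := by
    intro α β hα hβ hαβ
    have h1 : A * B ≤ (α * A) * (β * B) := by
      have : (α * A) * (β * B) = (α * β) * (A * B) := by ring
      rw [this]; nlinarith [mul_nonneg hAnn hBnn]
    have h2 : Real.sqrt (A * B) ≤ Real.sqrt ((α * A) * (β * B)) :=
      Real.sqrt_le_sqrt h1
    have h3 : 2 * Real.sqrt ((α * A) * (β * B)) ≤ α * A + β * B := by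
      have hu : 0 ≤ α * A := mul_nonneg hα hAnn
      have hv : 0 ≤ β * B := mul_nonneg hβ hBnn
      rw [Real.sqrt_mul hu]
      nlinarith [Real.sq_sqrt hu, Real.sq_sqrt hv,
        sq_nonneg (Real.sqrt (α * A) - Real.sqrt (β * B)),
        Real.sqrt_nonneg (α * A), Real.sqrt_nonneg (β * B)]
    linarith
  have hsq : Real.sqrt (B1 * L) ≤ Real.sqrt (A * B) := Real.sqrt_le_sqrt hkey
  constructor
  · intro α β hα hβ hαβ
    have := hAMGM α β hα hβ hαβ
    linarith
  · intro α β hα hβ hαβ heq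
    by_contra hne
    have h2a : 2 ≤ a := by omega
    have hstrict : Real.sqrt (B1 * L) < Real.sqrt (A * B) := by
      apply Real.sqrt_lt_sqrt (mul_pos hB1pos hLpos).le (hkey' h2a)
    have := hAMGM α β hα hβ hαβ
    rw [heq] at this
    linarith
end

section
/- Let k > l ≥ 0 be integers and let t be an integer with l+2 ≤ t ≤ k. Then every graph G with exactly C(k,2) + l edges contains at most C(k,t) cliques of size t. -/
set_option maxHeartbeats 1000000

open Finset Colex

lemma eq_pair_of_card_two {α : Type*} [LinearOrder α] {s : Finset α} (h : s.card = 2)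
    (hne : s.Nonempty) : s = {s.min' hne, s.max' hne} := by
  have hlt : s.min' hne < s.max' hne := s.min'_lt_max'_of_card (by omega)
  refine (Finset.eq_of_subset_of_card_le ?_ ?_).symm
  · intro x hx
    simp only [Finset.mem_insert, Finset.mem_singleton] at hx
    rcases hx with rfl | rfl
    · exact s.min'_mem hne
    · exact s.max'_mem hne
  · have h2 : ({s.min' hne, s.max' hne} : Finset α).card = 2 := by
      rw [Finset.card_insert_of_notMem (by simp [hlt.ne]), Finset.card_singleton]
    omega

/-- Let `k > l ≥ 0` be integers and `t` an integer with `l+2 ≤ t ≤ k`. Then every graph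
with exactly `C(k,2) + l` edges contains at most `C(k,t)` cliques of size `t`. -/
theorem clique_count_bound (V : Type*) [Fintype V] [DecidableEq V]
    (G : SimpleGraph V) [DecidableRel G.Adj] (k l t : ℕ) (hkl : l < k)
    (ht1 : l + 2 ≤ t) (ht2 : t ≤ k)
    (he : G.edgeFinset.card = Nat.choose k 2 + l) :
    (G.cliqueFinset t).card ≤ Nat.choose k t := by
  set n := Fintype.card V with hn
  rcases le_or_gt n k with hnk | hkn
  · -- few vertices: trivially at most C(n,t) ≤ C(k,t) cliques
    calc (G.cliqueFinset t).card ≤ ((Finset.univ : Finset V).powersetCard t).card := by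
            apply Finset.card_le_card
            intro s hs
            rw [SimpleGraph.mem_cliqueFinset_iff] at hs
            exact Finset.mem_powersetCard.2 ⟨Finset.subset_univ _, hs.card_eq⟩
      _ = n.choose t := by rw [Finset.card_powersetCard, Finset.card_univ]
      _ ≤ k.choose t := Nat.choose_le_choose t hnk
  -- now k < n
  by_contra hcon
  push_neg at hcon
  have ht2' : 2 ≤ t := by omega
  have e : V ≃ Fin n := Fintype.equivFin V
  have h1 : ∀ m ∈ Finset.range k, m < n := fun m hm => lt_trans (Finset.mem_range.1 hm) hkn
  have h2 : ∀ m ∈ Finset.range (t-1), m < n := fun m hm => by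
    have := Finset.mem_range.1 hm; omega
  set Kf : Finset (Fin n) := Finset.attachFin (Finset.range k) h1 with hKf
  set Rf : Finset (Fin n) := Finset.attachFin (Finset.range (t-1)) h2 with hRf
  set kk : Fin n := ⟨k, hkn⟩ with hkk
  have hmemK : ∀ a : Fin n, a ∈ Kf ↔ (a : ℕ) < k := fun a => by
    simp [hKf, Finset.mem_attachFin]
  have hmemR : ∀ a : Fin n, a ∈ Rf ↔ (a : ℕ) < t - 1 := fun a => by
    simp [hRf, Finset.mem_attachFin]
  have hkkK : kk ∉ Kf := by simp [hmemK, hkk]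
  have hkkv : (kk : ℕ) = k := rfl
  have hkkR : kk ∉ Rf := by rw [hmemR, hkkv]; omega
  set S : Finset (Fin n) := insert kk Rf with hS
  have hcardR : Rf.card = t - 1 := by rw [hRf, Finset.card_attachFin, Finset.card_range]
  have hcardK : Kf.card = k := by rw [hKf, Finset.card_attachFin, Finset.card_range]
  have hcardS : S.card = t := by
    rw [hS, Finset.card_insert_of_notMem hkkR, hcardR]; omega
  set P : Finset (Finset (Fin n)) := Finset.powersetCard t Kf with hP
  have hSP : S ∉ P := by
    intro h
    rw [hP, Finset.mem_powersetCard] at h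
    exact hkkK (h.1 (Finset.mem_insert_self _ _))
  set C : Finset (Finset (Fin n)) := insert S P with hC
  have hcardC : C.card = k.choose t + 1 := by
    rw [hC, Finset.card_insert_of_notMem hSP, hP, Finset.card_powersetCard, hcardK]
  -- C is sized t
  have hsized : (C : Set (Finset (Fin n))).Sized t := by
    intro A hA
    rw [hC] at hA
    simp only [Finset.coe_insert, Set.mem_insert_iff, Finset.mem_coe] at hA
    rcases hA with rfl | hA
    · exact hcardS
    · exact (Finset.mem_powersetCard.1 hA).2
  -- C is an initial segment
  have hinit : Finset.Colex.IsInitSeg C t := by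
    constructor
    · exact hsized
    · rintro A B hA ⟨hBA, hB⟩
      rw [hC, Finset.mem_insert] at hA
      rw [hC, Finset.mem_insert]
      rcases hA with rfl | hA
      · -- A = S
        obtain ⟨a, haS, haB, hlt⟩ := Finset.Colex.toColex_lt_toColex_iff_exists_forall_lt.1 hBA
        have hbnd : ∀ b ∈ B, b ≤ kk := by
          intro b hb
          by_cases hbS : b ∈ S
          · rw [hS, Finset.mem_insert] at hbS
            rcases hbS with rfl | hbS
            · exact le_refl _
            · have := (hmemR b).1 hbS
              rw [Fin.le_def, hkkv]; omega
          · have hba := hlt b hb hbS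
            have : a ≤ kk := by
              rw [hS, Finset.mem_insert] at haS
              rcases haS with rfl | haS
              · exact le_refl _
              · have := (hmemR a).1 haS; rw [Fin.le_def, hkkv]; omega
            exact le_of_lt (lt_of_lt_of_le hba this)
        by_cases hkkB : kk ∈ B
        · -- then B = S, contradiction with strict colex
          exfalso
          have hBneS : B ≠ S := by
            intro h; rw [h] at hBA; exact lt_irrefl _ hBA
          have hex : ∃ b ∈ B, b ∉ S := by
            by_contra hall
            push_neg at hall
            exact hBneS (Finset.eq_of_subset_of_card_le hall (by rw [hB, hcardS]))
          obtain ⟨b, hbB, hbS⟩ := hex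
          have hba := hlt b hbB hbS
          have hane : a ≠ kk := fun h => haB (h ▸ hkkB)
          have haR : a ∈ Rf := by
            rw [hS, Finset.mem_insert] at haS
            tauto
          have hav := (hmemR a).1 haR
          -- b ≤ kk, b ≠ kk (since kk ∈ S), b ∉ Rf so b.val ≥ t-1
          have hbne : b ≠ kk := fun h => hbS (h ▸ Finset.mem_insert_self _ _)
          have hbR : b ∉ Rf := fun h => hbS (Finset.mem_insert_of_mem h)
          have hbv : ¬ ((b : ℕ) < t - 1) := fun h => hbR ((hmemR b).2 h)
          have := Fin.lt_def.1 hba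
          omega
        · -- kk ∉ B, so B ⊆ Kf
          right
          rw [hP, Finset.mem_powersetCard]
          refine ⟨fun b hb => ?_, hB⟩
          have hble := Fin.le_def.1 (hbnd b hb)
          rw [hkkv] at hble
          have hbne : b ≠ kk := fun h => hkkB (h ▸ hb)
          rw [hmemK]
          have hbk : (b : ℕ) ≠ k := fun h => hbne (Fin.ext (h.trans hkkv.symm))
          omega
      · -- A ∈ P
        right
        rw [hP, Finset.mem_powersetCard] at hA ⊢
        refine ⟨?_, hB⟩
        have hAlt : ∀ x ∈ A, x < kk := by
          intro x hx
          have := (hmemK x).1 (hA.1 hx)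
          rw [Fin.lt_def, hkkv]; exact this
        have := Finset.Colex.forall_lt_mono hBA.le hAlt
        intro b hb
        rw [hmemK]
        exact Fin.lt_def.1 (this b hb)
  -- lower bound on iterated shadow of C
  have hshadowC : k.choose 2 + (t - 1) ≤ (Finset.shadow^[t-2] C).card := by
    set T1 : Finset (Finset (Fin n)) := Finset.powersetCard 2 Kf with hT1
    set T2 : Finset (Finset (Fin n)) := Rf.image (fun j => ({j, kk} : Finset (Fin n))) with hT2
    have hT1sub : T1 ⊆ Finset.shadow^[t-2] C := by
      intro B hB
      rw [hT1, Finset.mem_powersetCard] at hB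
      rw [Finset.mem_shadow_iterate_iff_exists_sdiff]
      obtain ⟨A, hBA, hAK, hAcard⟩ :=
        Finset.exists_subsuperset_card_eq (n := t) hB.1
          (le_of_eq_of_le hB.2 ht2') (by rw [hcardK]; exact ht2)
      refine ⟨A, ?_, hBA, ?_⟩
      · rw [hC, Finset.mem_insert]
        right
        rw [hP, Finset.mem_powersetCard]
        exact ⟨hAK, hAcard⟩
      · rw [Finset.card_sdiff_of_subset hBA, hAcard, hB.2]
    have hT2sub : T2 ⊆ Finset.shadow^[t-2] C := by
      intro B hB
      rw [hT2, Finset.mem_image] at hB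
      obtain ⟨j, hj, rfl⟩ := hB
      have hjne : j ≠ kk := by
        intro h
        exact hkkR (h ▸ hj)
      have hjS : ({j, kk} : Finset (Fin n)) ⊆ S := by
        intro x hx
        simp only [Finset.mem_insert, Finset.mem_singleton] at hx
        rcases hx with rfl | rfl
        · exact Finset.mem_insert_of_mem hj
        · exact Finset.mem_insert_self _ _
      rw [Finset.mem_shadow_iterate_iff_exists_sdiff]
      refine ⟨S, by rw [hC]; exact Finset.mem_insert_self _ _, hjS, ?_⟩
      rw [Finset.card_sdiff_of_subset hjS, hcardS,
        Finset.card_insert_of_notMem (by simp [hjne]), Finset.card_singleton]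
    have hdisj : Disjoint T1 T2 := by
      rw [Finset.disjoint_right]
      intro B hB2 hB1
      rw [hT2, Finset.mem_image] at hB2
      obtain ⟨j, hj, rfl⟩ := hB2
      rw [hT1, Finset.mem_powersetCard] at hB1
      exact hkkK (hB1.1 (by simp))
    have hcardT1 : T1.card = k.choose 2 := by
      rw [hT1, Finset.card_powersetCard, hcardK]
    have hcardT2 : T2.card = t - 1 := by
      rw [hT2, Finset.card_image_of_injOn, hcardR]
      intro x hx y hy hxy
      have hxne : x ≠ kk := fun h => hkkR (h ▸ hx)
      have hyne : y ≠ kk := fun h => hkkR (h ▸ hy)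
      have hxy' : ({x, kk} : Finset (Fin n)) = {y, kk} := hxy
      have : x ∈ ({y, kk} : Finset (Fin n)) := by
        rw [← hxy']; exact Finset.mem_insert_self _ _
      simp only [Finset.mem_insert, Finset.mem_singleton] at this
      tauto
    calc k.choose 2 + (t - 1) = (T1 ∪ T2).card := by
            rw [Finset.card_union_of_disjoint hdisj, hcardT1, hcardT2]
      _ ≤ _ := Finset.card_le_card (Finset.union_subset hT1sub hT2sub)
  -- the clique family, transported to Fin n
  set A : Finset (Finset (Fin n)) := (G.cliqueFinset t).image (Finset.image e) with hA
  have hAsized : (A : Set (Finset (Fin n))).Sized t := by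
    intro s hs
    simp only [hA, Finset.coe_image, Set.mem_image, Finset.mem_coe] at hs
    obtain ⟨c, hc, rfl⟩ := hs
    rw [Finset.card_image_of_injective _ e.injective]
    exact (SimpleGraph.mem_cliqueFinset_iff.1 hc).card_eq
  have hcardA : A.card = (G.cliqueFinset t).card := by
    rw [hA, Finset.card_image_of_injective _ (Finset.image_injective e.injective)]
  have hCA : C.card ≤ A.card := by
    rw [hcardC, hcardA]; omega
  have hKK := Finset.iterated_kk (k := t - 2) hAsized hCA hinit
  -- upper bound on iterated shadow of A by edges
  have hshadowA : (Finset.shadow^[t-2] A).card ≤ G.edgeFinset.card := by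
    have hsh : ((Finset.shadow^[t-2] A : Finset (Finset (Fin n))) :
        Set (Finset (Fin n))).Sized (t - (t-2)) := Set.Sized.shadow_iterate hAsized
    have h2' : t - (t - 2) = 2 := by omega
    have hnpos : 0 < n := by omega
    set f : Finset (Fin n) → Sym2 V := fun B =>
      if h : B.Nonempty then s(e.symm (B.min' h), e.symm (B.max' h))
      else s(e.symm ⟨0, hnpos⟩, e.symm ⟨0, hnpos⟩) with hf
    apply Finset.card_le_card_of_injOn f
    · intro B hB
      have hBcard : B.card = 2 := by rw [hsh hB, h2']
      have hBne : B.Nonempty := by rw [← Finset.card_pos, hBcard]; norm_num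
      obtain ⟨s, hs, hBs, -⟩ := Finset.mem_shadow_iterate_iff_exists_sdiff.1 hB
      rw [hA, Finset.mem_image] at hs
      obtain ⟨c, hc, rfl⟩ := hs
      have hclique := SimpleGraph.mem_cliqueFinset_iff.1 hc
      have hmin : e.symm (B.min' hBne) ∈ c := by
        have := hBs (B.min'_mem hBne)
        rw [Finset.mem_image] at this
        obtain ⟨v, hv, hev⟩ := this
        rw [← hev, Equiv.symm_apply_apply]; exact hv
      have hmax : e.symm (B.max' hBne) ∈ c := by
        have := hBs (B.max'_mem hBne)
        rw [Finset.mem_image] at this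
        obtain ⟨v, hv, hev⟩ := this
        rw [← hev, Equiv.symm_apply_apply]; exact hv
      have hlt : B.min' hBne < B.max' hBne :=
        B.min'_lt_max'_of_card (by rw [hBcard]; norm_num)
      have hne : e.symm (B.min' hBne) ≠ e.symm (B.max' hBne) :=
        fun h => absurd (e.symm.injective h) hlt.ne
      have hadj : G.Adj (e.symm (B.min' hBne)) (e.symm (B.max' hBne)) :=
        hclique.1 hmin hmax hne
      rw [hf]
      simp only [hBne, dif_pos]
      rwa [Finset.mem_coe, SimpleGraph.mem_edgeFinset, SimpleGraph.mem_edgeSet]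
    · intro B hB B' hB' hff
      have hBcard : B.card = 2 := by rw [hsh hB, h2']
      have hBcard' : B'.card = 2 := by rw [hsh hB', h2']
      have hBne : B.Nonempty := by rw [← Finset.card_pos, hBcard]; norm_num
      have hBne' : B'.Nonempty := by rw [← Finset.card_pos, hBcard']; norm_num
      rw [hf] at hff
      simp only [hBne, hBne', dif_pos] at hff
      rw [Sym2.eq_iff] at hff
      have hmm : B.min' hBne = B'.min' hBne' ∧ B.max' hBne = B'.max' hBne' := by
        rcases hff with ⟨h1', h2''⟩ | ⟨h1', h2''⟩
        · exact ⟨e.symm.injective h1', e.symm.injective h2''⟩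
        · have ha := e.symm.injective h1'
          have hb := e.symm.injective h2''
          have l1 : B.min' hBne ≤ B.max' hBne := Finset.min'_le _ _ (B.max'_mem hBne)
          have l2 : B'.min' hBne' ≤ B'.max' hBne' := Finset.min'_le _ _ (B'.max'_mem hBne')
          have e1 : B.min' hBne = B'.min' hBne' :=
            le_antisymm (hb ▸ l1) (ha ▸ l2)
          have e2 : B.max' hBne = B'.max' hBne' := by
            rw [hb, ← e1, ha]
          exact ⟨e1, e2⟩
      rw [eq_pair_of_card_two hBcard hBne, eq_pair_of_card_two hBcard' hBne', hmm.1, hmm.2]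
  have hKK' : (Finset.shadow^[t - 2] C).card ≤ (Finset.shadow^[t - 2] A).card := by
    convert hKK using 3 <;> congr!
  have := hshadowC.trans (hKK'.trans hshadowA)
  omega
end
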